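/- arXiv:2006.13150 — 3 statements merged into one kernel-verified Lean document; each statement's English description precedes it below -/
import Mathlib

section
/- Let (C, ⊗, 1) be a monoidal category and let α > 0 be a real number. For any two monoidal presheaves 𝒦, 𝒦' on ℝ_{≥0} with values in C, the map sending a morphism of monoidal presheaves f : 𝒦 → 𝒦' to its restriction f|_{[0,α]} : 𝒦|_{[0,α]} → 𝒦'|_{[0,α]} is a bijection from Hom(𝒦, 𝒦') to Hom(𝒦|_{[0,α]}, 𝒦'|_{[0,α]}); that is, the restriction functor Fun^⊗(ℝ_{≥0}^op, C) → Fun^⊗([0,α]^op, C) is fully faithful. -/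
open CategoryTheory MonoidalCategory

universe v u

/-- Congruence for a family of objects indexed by points of a subset of `ℝ`. -/
theorem objCongr {C : Type u} [Category.{v} C] {I : Set ℝ} (f : ∀ a : ℝ, a ∈ I → C)
    {a b : ℝ} (h : a = b) (ha : a ∈ I) (hb : b ∈ I) : f a ha = f b hb := by
  subst h; rfl

/-- A monoidal presheaf on a subset `I ⊆ ℝ` (regarded as a poset category, with the
partially defined monoidal structure given by addition) with values in a monoidal
category `C`. -/
structure MonoidalPresheaf (C : Type u) [Category.{v} C] [MonoidalCategory C]
    (I : Set ℝ) where
  /-- the value at `a ∈ I` -/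
  obj : ∀ a : ℝ, a ∈ I → C
  /-- the restriction morphisms `ρ_{a,b} : K_b ⟶ K_a` for `a ≤ b` -/
  res : ∀ (a b : ℝ) (ha : a ∈ I) (hb : b ∈ I), a ≤ b → (obj b hb ⟶ obj a ha)
  res_id : ∀ (a : ℝ) (ha : a ∈ I), res a a ha ha le_rfl = 𝟙 (obj a ha)
  res_comp : ∀ (a b c : ℝ) (ha : a ∈ I) (hb : b ∈ I) (hc : c ∈ I)
      (hab : a ≤ b) (hbc : b ≤ c),
      res b c hb hc hbc ≫ res a b ha hb hab = res a c ha hc (hab.trans hbc)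
  /-- `φ0 : 1 ≅ K_0` -/
  unit : ∀ h0 : (0 : ℝ) ∈ I, 𝟙_ C ≅ obj 0 h0
  /-- `φ2(a,b) : K_a ⊗ K_b ≅ K_{a+b}` -/
  mul : ∀ (a b : ℝ) (ha : a ∈ I) (hb : b ∈ I) (hab : a + b ∈ I),
      obj a ha ⊗ obj b hb ≅ obj (a + b) hab
  /-- compatibility of `φ2` with the restriction morphisms -/
  mul_res : ∀ (a b a' b' : ℝ) (ha : a ∈ I) (hb : b ∈ I) (ha' : a' ∈ I) (hb' : b' ∈ I)
      (hab : a + b ∈ I) (hab' : a' + b' ∈ I) (haa' : a ≤ a') (hbb' : b ≤ b'),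
      (mul a' b' ha' hb' hab').hom ≫ res (a + b) (a' + b') hab hab' (add_le_add haa' hbb')
        = (res a a' ha ha' haa' ⊗ₘ res b b' hb hb' hbb') ≫ (mul a b ha hb hab).hom
  /-- associativity of `φ2` -/
  assoc : ∀ (a b c : ℝ) (ha : a ∈ I) (hb : b ∈ I) (hc : c ∈ I)
      (hab : a + b ∈ I) (hbc : b + c ∈ I) (habc : a + b + c ∈ I) (habc' : a + (b + c) ∈ I),
      (α_ (obj a ha) (obj b hb) (obj c hc)).hom ≫ (𝟙 (obj a ha) ⊗ₘ (mul b c hb hc hbc).hom)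
          ≫ (mul a (b + c) ha hbc habc').hom
        = ((mul a b ha hb hab).hom ⊗ₘ 𝟙 (obj c hc)) ≫ (mul (a + b) c hab hc habc).hom
          ≫ eqToHom (objCongr obj (add_assoc a b c) habc habc')
  /-- left unitality -/
  unit_mul : ∀ (a : ℝ) (ha : a ∈ I) (h0 : (0 : ℝ) ∈ I) (h0a : 0 + a ∈ I),
      ((unit h0).hom ⊗ₘ 𝟙 (obj a ha)) ≫ (mul 0 a h0 ha h0a).hom
        = (λ_ (obj a ha)).hom ≫ eqToHom (objCongr obj (zero_add a).symm ha h0a)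
  /-- right unitality -/
  mul_unit : ∀ (a : ℝ) (ha : a ∈ I) (h0 : (0 : ℝ) ∈ I) (ha0 : a + 0 ∈ I),
      (𝟙 (obj a ha) ⊗ₘ (unit h0).hom) ≫ (mul a 0 ha h0 ha0).hom
        = (ρ_ (obj a ha)).hom ≫ eqToHom (objCongr obj (add_zero a).symm ha ha0)

namespace MonoidalPresheaf

variable {C : Type u} [Category.{v} C] [MonoidalCategory C] {I : Set ℝ}

/-- A morphism of monoidal presheaves. -/
@[ext]
structure Hom (K K' : MonoidalPresheaf C I) where
  app : ∀ (a : ℝ) (ha : a ∈ I), K.obj a ha ⟶ K'.obj a ha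
  naturality : ∀ (a b : ℝ) (ha : a ∈ I) (hb : b ∈ I) (hab : a ≤ b),
      K.res a b ha hb hab ≫ app a ha = app b hb ≫ K'.res a b ha hb hab
  monoidal : ∀ (a b : ℝ) (ha : a ∈ I) (hb : b ∈ I) (hab : a + b ∈ I),
      (K.mul a b ha hb hab).hom ≫ app (a + b) hab
        = (app a ha ⊗ₘ app b hb) ≫ (K'.mul a b ha hb hab).hom

instance : Category (MonoidalPresheaf C I) where
  Hom K K' := Hom K K'
  id K :=
    { app := fun a ha => 𝟙 (K.obj a ha)
      naturality := by intros; simp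
      monoidal := by intros; simp }
  comp {K K' K''} f g :=
    { app := fun a ha => f.app a ha ≫ g.app a ha
      naturality := by
        intros a b ha hb hab
        rw [← Category.assoc, f.naturality, Category.assoc, g.naturality, Category.assoc]
      monoidal := by
        intros a b ha hb hab
        rw [← Category.assoc, f.monoidal, Category.assoc, g.monoidal, ← Category.assoc,
          tensorHom_comp_tensorHom] }
  id_comp f := by apply Hom.ext; funext a ha; simp
  comp_id f := by apply Hom.ext; funext a ha; simp
  assoc f g h := by apply Hom.ext; funext a ha; simp

end MonoidalPresheaf

/-- Restriction of a monoidal presheaf along an inclusion of subsets of `ℝ`. -/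
def MonoidalPresheaf.restrictObj {C : Type u} [Category.{v} C] [MonoidalCategory C]
    {I J : Set ℝ} (hIJ : I ⊆ J) (K : MonoidalPresheaf C J) : MonoidalPresheaf C I where
  obj a ha := K.obj a (hIJ ha)
  res a b ha hb hab := K.res a b (hIJ ha) (hIJ hb) hab
  res_id a ha := K.res_id a (hIJ ha)
  res_comp a b c ha hb hc hab hbc := K.res_comp a b c _ _ _ hab hbc
  unit h0 := K.unit (hIJ h0)
  mul a b ha hb hab := K.mul a b (hIJ ha) (hIJ hb) (hIJ hab)
  mul_res a b a' b' ha hb ha' hb' hab hab' haa' hbb' :=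
    K.mul_res a b a' b' _ _ _ _ _ _ haa' hbb'
  assoc a b c ha hb hc hab hbc habc habc' := K.assoc a b c _ _ _ _ _ _ _
  unit_mul a ha h0 h0a := K.unit_mul a _ _ _
  mul_unit a ha h0 ha0 := K.mul_unit a _ _ _

/-- The restriction functor `Fun^⊗(J^op, C) ⥤ Fun^⊗(I^op, C)` induced by an
inclusion `I ⊆ J` of subsets of `ℝ`. -/
def MonoidalPresheaf.restrictFunctor (C : Type u) [Category.{v} C] [MonoidalCategory C]
    {I J : Set ℝ} (hIJ : I ⊆ J) :
    MonoidalPresheaf C J ⥤ MonoidalPresheaf C I where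
  obj K := MonoidalPresheaf.restrictObj hIJ K
  map {K K'} f :=
    { app := fun a ha => f.app a (hIJ ha)
      naturality := fun a b ha hb hab => f.naturality a b _ _ hab
      monoidal := fun a b ha hb hab => f.monoidal a b _ _ _ }
  map_id K := rfl
  map_comp f g := rfl

set_option linter.unusedVariables false

namespace MonoidalPresheaf

variable {C : Type u} [Category.{v} C] [MonoidalCategory C]

section Aux

variable {α : ℝ} (hα : 0 < α)

local notation "Iic" => Set.Ici (0:ℝ)

lemma incl (hα : 0 < α) : Set.Icc (0:ℝ) α ⊆ Set.Ici 0 := fun _ hx => hx.1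

variable {K K' : MonoidalPresheaf C (Set.Ici (0:ℝ))}

/-- transport a family of morphisms along an equality of indices -/
lemma app_congr (t : ∀ (a : ℝ) (ha : a ∈ Set.Ici (0:ℝ)), K.obj a ha ⟶ K'.obj a ha)
    {a b : ℝ} (h : a = b) (ha : a ∈ Set.Ici (0:ℝ)) (hb : b ∈ Set.Ici (0:ℝ)) :
    t a ha = eqToHom (objCongr K.obj h ha hb) ≫ t b hb ≫
      eqToHom (objCongr K'.obj h.symm hb ha) := by
  subst h; simp

lemma res_congr (K : MonoidalPresheaf C (Set.Ici (0:ℝ))) {a b a' b' : ℝ}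
    (h1 : a = a') (h2 : b = b') (ha ha' hb hb') (hab : a ≤ b) (hab' : a' ≤ b') :
    K.res a b ha hb hab = eqToHom (objCongr K.obj h2 hb hb') ≫
      K.res a' b' ha' hb' hab' ≫ eqToHom (objCongr K.obj h1.symm ha' ha) := by
  subst h1; subst h2; simp

lemma mul_congr (K : MonoidalPresheaf C (Set.Ici (0:ℝ))) {x y x' y' : ℝ}
    (hx : x = x') (hy : y = y') (h1 h2 h3 h1' h2' h3') :
    (K.mul x y h1 h2 h3).hom =
      (eqToHom (objCongr K.obj hx h1 h1') ⊗ₘ eqToHom (objCongr K.obj hy h2 h2')) ≫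
      (K.mul x' y' h1' h2' h3').hom ≫
      eqToHom (objCongr K.obj (by rw [hx, hy]) h3' h3) := by
  subst hx; subst hy; simp [id_tensorHom_id]


variable (K K') in
/-- The fuel-indexed extension of a morphism of restricted presheaves. -/
noncomputable def ext (g : MonoidalPresheaf.Hom (restrictObj (incl hα) K) (restrictObj (incl hα) K')) :
    ∀ (n : ℕ) (a : ℝ) (ha : a ∈ Set.Ici (0:ℝ)), a ≤ n * α → (K.obj a ha ⟶ K'.obj a ha) :=
  fun n => Nat.rec
    (motive := fun n => ∀ (a : ℝ) (ha : a ∈ Set.Ici (0:ℝ)), a ≤ n * α →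
      (K.obj a ha ⟶ K'.obj a ha))
    (fun a ha h => g.app a ⟨ha, by simp only [Nat.cast_zero, zero_mul] at h; linarith⟩)
    (fun n IH a ha h =>
      if hle : a ≤ α then g.app a ⟨ha, hle⟩
      else
        have h1 : a - α ∈ Set.Ici (0:ℝ) := Set.mem_Ici.2 (by have := not_le.1 hle; linarith)
        have h2 : α ∈ Set.Ici (0:ℝ) := Set.mem_Ici.2 hα.le
        have h3 : a - α + α ∈ Set.Ici (0:ℝ) := by rw [sub_add_cancel]; exact ha
        eqToHom (objCongr K.obj (sub_add_cancel a α).symm ha h3) ≫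
        (K.mul (a-α) α h1 h2 h3).inv ≫
        (IH (a-α) h1 (by push_cast at h ⊢; linarith) ⊗ₘ g.app α ⟨hα.le, le_rfl⟩) ≫
        (K'.mul (a-α) α h1 h2 h3).hom ≫
        eqToHom (objCongr K'.obj (sub_add_cancel a α) h3 ha)) n

variable (g : MonoidalPresheaf.Hom (restrictObj (incl hα) K) (restrictObj (incl hα) K'))

lemma mem1 {a : ℝ} (hle : ¬ a ≤ α) : a - α ∈ Set.Ici (0:ℝ) :=
  Set.mem_Ici.2 (by have := not_le.1 hle; linarith)

include hα in
lemma mem2 : α ∈ Set.Ici (0:ℝ) := Set.mem_Ici.2 hα.le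

lemma mem3 {a : ℝ} (ha : a ∈ Set.Ici (0:ℝ)) : a - α + α ∈ Set.Ici (0:ℝ) := by
  rw [sub_add_cancel]; exact ha

lemma bound1 {n : ℕ} {a : ℝ} (h : a ≤ (n+1 : ℕ) * α) : a - α ≤ n * α := by
  push_cast at h ⊢; linarith

lemma ext_zero (a : ℝ) (ha : a ∈ Set.Ici (0:ℝ)) (h : a ≤ (0:ℕ) * α) (h' : a ≤ α) :
    ext hα K K' g 0 a ha h = g.app a ⟨ha, h'⟩ := rfl

lemma ext_succ (n : ℕ) (a : ℝ) (ha : a ∈ Set.Ici (0:ℝ)) (h : a ≤ (n+1 : ℕ) * α) :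
    ext hα K K' g (n+1) a ha h =
    if hle : a ≤ α then g.app a ⟨ha, hle⟩
    else
      eqToHom (objCongr K.obj (sub_add_cancel a α).symm ha (mem3 ha)) ≫
      (K.mul (a-α) α (mem1 hle) (mem2 hα) (mem3 ha)).inv ≫
      (MonoidalCategoryStruct.tensorHom (ext hα K K' g n (a-α) (mem1 hle) (bound1 h))
        (g.app α ⟨hα.le, le_rfl⟩ : K.obj α (mem2 hα) ⟶ K'.obj α (mem2 hα))) ≫
      (K'.mul (a-α) α (mem1 hle) (mem2 hα) (mem3 ha)).hom ≫
      eqToHom (objCongr K'.obj (sub_add_cancel a α) (mem3 ha) ha) := rfl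

lemma ext_indep : ∀ (n m : ℕ) (a : ℝ) (ha : a ∈ Set.Ici (0:ℝ)) (h : a ≤ n * α)
    (h' : a ≤ m * α), ext hα K K' g n a ha h = ext hα K K' g m a ha h' := by
  intro n
  induction n with
  | zero =>
    intro m a ha h h'
    have ha0 : a ≤ α := by simp only [Nat.cast_zero, zero_mul] at h; linarith
    cases m with
    | zero => rfl
    | succ m => rw [ext_zero hα g a ha h ha0]; exact ((ext_succ hα g m a ha h').trans (dif_pos ha0)).symm
  | succ n IH =>
    intro m a ha h h'
    by_cases hle : a ≤ α
    · rw [(ext_succ hα g n a ha h).trans (dif_pos hle)]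
      cases m with
      | zero => rw [ext_zero hα g a ha h' hle]
      | succ m => rw [(ext_succ hα g m a ha h').trans (dif_pos hle)]
    · cases m with
      | zero =>
        exfalso
        simp only [Nat.cast_zero, zero_mul] at h'
        exact hle (by linarith)
      | succ m =>
        rw [(ext_succ hα g n a ha h).trans (dif_neg hle), (ext_succ hα g m a ha h').trans (dif_neg hle),
          IH m (a - α) (mem1 hle) (bound1 h) (bound1 h')]

lemma ceil_bound (hα : 0 < α) (a : ℝ) : a ≤ (⌈a / α⌉₊ : ℕ) * α := by
  have h := Nat.le_ceil (a / α)
  exact (div_le_iff₀ hα).1 h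

/-- The extension of `g` to all of `ℝ≥0`. -/
noncomputable def E (a : ℝ) (ha : a ∈ Set.Ici (0:ℝ)) : K.obj a ha ⟶ K'.obj a ha :=
  ext hα K K' g ⌈a / α⌉₊ a ha (ceil_bound hα a)

lemma E_eq (a : ℝ) (ha : a ∈ Set.Ici (0:ℝ)) (n : ℕ) (h : a ≤ n * α) :
    E hα g a ha = ext hα K K' g n a ha h := ext_indep hα g _ n a ha _ h

lemma E_small (a : ℝ) (ha : a ∈ Set.Ici (0:ℝ)) (h' : a ≤ α) :
    E hα g a ha = g.app a ⟨ha, h'⟩ := by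
  rw [E_eq hα g a ha 1 (by push_cast; nlinarith)]
  exact (ext_succ hα g 0 a ha (by push_cast; nlinarith)).trans (dif_pos h')

lemma E_peel (a : ℝ) (ha : a ∈ Set.Ici (0:ℝ)) (hle : ¬ a ≤ α) :
    E hα g a ha =
      eqToHom (objCongr K.obj (sub_add_cancel a α).symm ha (mem3 ha)) ≫
      (K.mul (a-α) α (mem1 hle) (mem2 hα) (mem3 ha)).inv ≫
      (MonoidalCategoryStruct.tensorHom (E hα g (a-α) (mem1 hle))
        (g.app α ⟨hα.le, le_rfl⟩ : K.obj α (mem2 hα) ⟶ K'.obj α (mem2 hα))) ≫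
      (K'.mul (a-α) α (mem1 hle) (mem2 hα) (mem3 ha)).hom ≫
      eqToHom (objCongr K'.obj (sub_add_cancel a α) (mem3 ha) ha) := by
  have hb : a ≤ ((⌈(a - α) / α⌉₊ + 1 : ℕ)) * α := by
    have := ceil_bound hα (a - α)
    push_cast
    push_cast at this
    linarith
  rw [E_eq hα g a ha _ hb, (ext_succ hα g _ a ha hb).trans (dif_neg hle)]
  rfl

lemma E_congr {a b : ℝ} (h : a = b) (ha : a ∈ Set.Ici (0:ℝ)) (hb : b ∈ Set.Ici (0:ℝ)) :
    E hα g a ha = eqToHom (objCongr K.obj h ha hb) ≫ E hα g b hb ≫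
      eqToHom (objCongr K'.obj h.symm hb ha) :=
  app_congr (E hα g) h ha hb

lemma conj_assoc (x y z : ℝ) (hx hy hz hxy hyz hxyz hxyz')
    (u : K.obj x hx ⟶ K'.obj x hx) (v : K.obj y hy ⟶ K'.obj y hy)
    (w : K.obj z hz ⟶ K'.obj z hz) :
    (K.mul (x+y) z hxy hz hxyz).inv ≫
      (MonoidalCategoryStruct.tensorHom
        ((K.mul x y hx hy hxy).inv ≫ MonoidalCategoryStruct.tensorHom u v ≫
          (K'.mul x y hx hy hxy).hom) w) ≫
      (K'.mul (x+y) z hxy hz hxyz).hom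
    = eqToHom (objCongr K.obj (add_assoc x y z) hxyz hxyz') ≫
      (K.mul x (y+z) hx hyz hxyz').inv ≫
      (MonoidalCategoryStruct.tensorHom u
        ((K.mul y z hy hz hyz).inv ≫ MonoidalCategoryStruct.tensorHom v w ≫
          (K'.mul y z hy hz hyz).hom)) ≫
      (K'.mul x (y+z) hx hyz hxyz').hom ≫
      eqToHom (objCongr K'.obj (add_assoc x y z).symm hxyz' hxyz) := by
  have hK := K.assoc x y z hx hy hz hxy hyz hxyz hxyz'
  have hK' := K'.assoc x y z hx hy hz hxy hyz hxyz hxyz'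
  have eKhom : (K.mul (x+y) z hxy hz hxyz).hom =
      (MonoidalCategoryStruct.tensorHom (K.mul x y hx hy hxy).inv (𝟙 (K.obj z hz))) ≫
      (α_ _ _ _).hom ≫
      (MonoidalCategoryStruct.tensorHom (𝟙 (K.obj x hx)) (K.mul y z hy hz hyz).hom) ≫
      (K.mul x (y+z) hx hyz hxyz').hom ≫
      eqToHom (objCongr K.obj (add_assoc x y z).symm hxyz' hxyz) := by
    have h2 := congrArg (fun q =>
      (MonoidalCategoryStruct.tensorHom (K.mul x y hx hy hxy).inv (𝟙 (K.obj z hz))) ≫ q ≫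
        eqToHom (objCongr K.obj (add_assoc x y z).symm hxyz' hxyz)) hK
    simp only [Category.assoc, eqToHom_trans, eqToHom_refl, Category.comp_id] at h2
    conv_rhs at h2 => rw [← Category.assoc, tensorHom_comp_tensorHom]; simp
    exact h2.symm
  have eK'hom : (K'.mul (x+y) z hxy hz hxyz).hom =
      (MonoidalCategoryStruct.tensorHom (K'.mul x y hx hy hxy).inv (𝟙 (K'.obj z hz))) ≫
      (α_ _ _ _).hom ≫
      (MonoidalCategoryStruct.tensorHom (𝟙 (K'.obj x hx)) (K'.mul y z hy hz hyz).hom) ≫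
      (K'.mul x (y+z) hx hyz hxyz').hom ≫
      eqToHom (objCongr K'.obj (add_assoc x y z).symm hxyz' hxyz) := by
    have h2 := congrArg (fun q =>
      (MonoidalCategoryStruct.tensorHom (K'.mul x y hx hy hxy).inv (𝟙 (K'.obj z hz))) ≫ q ≫
        eqToHom (objCongr K'.obj (add_assoc x y z).symm hxyz' hxyz)) hK'
    simp only [Category.assoc, eqToHom_trans, eqToHom_refl, Category.comp_id] at h2
    conv_rhs at h2 => rw [← Category.assoc, tensorHom_comp_tensorHom]; simp
    exact h2.symm
  rw [← cancel_epi (K.mul (x+y) z hxy hz hxyz).hom, Iso.hom_inv_id_assoc]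
  conv_rhs => rw [eKhom]
  conv_lhs => rw [eK'hom]
  simp only [Category.assoc, eqToHom_trans, eqToHom_refl, Category.comp_id,
    Iso.hom_inv_id_assoc, eqToHom_trans_assoc, Category.id_comp]
  rw [← Category.assoc, tensorHom_comp_tensorHom, Category.comp_id, Category.assoc, Category.assoc]
  simp only [Iso.hom_inv_id, Category.comp_id]
  rw [show (((K.mul x y hx hy hxy).inv ≫ (u ⊗ₘ v)) ⊗ₘ w) =
    (((K.mul x y hx hy hxy).inv ⊗ₘ 𝟙 (K.obj z hz)) ≫ ((u ⊗ₘ v) ⊗ₘ w)) from by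
      rw [tensorHom_comp_tensorHom]; simp]
  rw [Category.assoc, associator_naturality_assoc]
  congr 2
  rw [← Category.assoc, tensorHom_comp_tensorHom]
  conv_rhs => rw [← Category.assoc, tensorHom_comp_tensorHom]
  simp

lemma mul_inv_congr (K : MonoidalPresheaf C (Set.Ici (0:ℝ))) {x y x' y' : ℝ}
    (hx : x = x') (hy : y = y') (h1 h2 h3 h1' h2' h3') :
    (K.mul x y h1 h2 h3).inv =
      eqToHom (objCongr K.obj (by rw [hx, hy]) h3 h3') ≫
      (K.mul x' y' h1' h2' h3').inv ≫
      MonoidalCategoryStruct.tensorHom (eqToHom (objCongr K.obj hx.symm h1' h1))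
        (eqToHom (objCongr K.obj hy.symm h2' h2)) := by
  subst hx; subst hy; simp [id_tensorHom_id]

lemma tensor_congr_left {A A' B B' X Y : C} (h : A = A') (h' : B' = B)
    (f : A' ⟶ B') (t : X ⟶ Y) :
    MonoidalCategoryStruct.tensorHom (eqToHom h ≫ f ≫ eqToHom h') t =
      eqToHom (by rw [h]) ≫ MonoidalCategoryStruct.tensorHom f t ≫
        eqToHom (show (B' ⊗ Y : C) = B ⊗ Y by rw [h']) := by
  subst h; subst h'; simp [id_tensorHom_id]

lemma eqToHom_tensor_id {A A' X : C} (h : A = A') :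
    MonoidalCategoryStruct.tensorHom (eqToHom h) (𝟙 X) =
      eqToHom (show (A ⊗ X : C) = A' ⊗ X by rw [h]) := by
  subst h; simp [id_tensorHom_id]

lemma id_tensor_eqToHom {A A' X : C} (h : A = A') :
    MonoidalCategoryStruct.tensorHom (𝟙 X) (eqToHom h) =
      eqToHom (show (X ⊗ A : C) = X ⊗ A' by rw [h]) := by
  subst h; simp [id_tensorHom_id]

lemma P_small (a b : ℝ) (ha hb hab) (hs : a + b ≤ α) :
    (K.mul a b ha hb hab).hom ≫ E hα g (a+b) hab =
      MonoidalCategoryStruct.tensorHom (E hα g a ha) (E hα g b hb) ≫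
        (K'.mul a b ha hb hab).hom := by
  have h1 : a ≤ α := by have := Set.mem_Ici.1 hb; linarith
  have h2 : b ≤ α := by have := Set.mem_Ici.1 ha; linarith
  rw [E_small hα g a ha h1, E_small hα g b hb h2, E_small hα g (a+b) hab hs]
  exact g.monoidal a b ⟨ha, h1⟩ ⟨hb, h2⟩ ⟨hab, hs⟩

lemma eqToHom_conj_aux {X Y Z W : C} (p : X = Y) (q : Y = X) (f : X ⟶ Z) (r : Z = W)
    (s : W = Z) : eqToHom p ≫ (eqToHom q ≫ f ≫ eqToHom r) ≫ eqToHom s = f := by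
  simp

lemma P_alpha (c : ℝ) (hc : c ∈ Set.Ici (0:ℝ)) (hs : c + α ∈ Set.Ici (0:ℝ)) :
    (K.mul c α hc (mem2 hα) hs).hom ≫ E hα g (c+α) hs =
      MonoidalCategoryStruct.tensorHom (E hα g c hc) (E hα g α (mem2 hα)) ≫
        (K'.mul c α hc (mem2 hα) hs).hom := by
  by_cases h0 : c + α ≤ α
  · exact P_small hα g c α hc (mem2 hα) hs h0
  · have hc' : c + α - α = c := by ring
    have key := E_peel hα g (c+α) hs h0
    rw [E_congr hα g hc' (mem1 h0) hc] at key
    rw [mul_inv_congr K hc' rfl (mem1 h0) (mem2 hα) (mem3 hs) hc (mem2 hα) hs] at key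
    rw [mul_congr K' hc' rfl (mem1 h0) (mem2 hα) (mem3 hs) hc (mem2 hα) hs] at key
    rw [E_small hα g α (mem2 hα) le_rfl]
    rw [key]
    erw [tensor_congr_left]
    simp only [Category.assoc, eqToHom_trans, eqToHom_refl, Category.comp_id, Category.id_comp,
      eqToHom_trans_assoc, Iso.hom_inv_id_assoc]
    simp [eqToHom_tensor_id, eqToHom_trans_assoc, eqToHom_refl]
    congr 1
    exact eqToHom_conj_aux _ _ _ _ _

lemma tensor_congr_right {A A' B B' X Y : C} (h : A = A') (h' : B' = B)
    (f : A' ⟶ B') (t : X ⟶ Y) :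
    MonoidalCategoryStruct.tensorHom t (eqToHom h ≫ f ≫ eqToHom h') =
      eqToHom (show (X ⊗ A : C) = X ⊗ A' by rw [h]) ≫
      MonoidalCategoryStruct.tensorHom t f ≫
        eqToHom (show (Y ⊗ B' : C) = Y ⊗ B by rw [h']) := by
  subst h; subst h'; simp [id_tensorHom_id]

lemma conj_of_P {x y : ℝ} {hx hy hxy}
    (h : (K.mul x y hx hy hxy).hom ≫ E hα g (x+y) hxy =
      MonoidalCategoryStruct.tensorHom (E hα g x hx) (E hα g y hy) ≫
        (K'.mul x y hx hy hxy).hom) :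
    (K.mul x y hx hy hxy).inv ≫
      MonoidalCategoryStruct.tensorHom (E hα g x hx) (E hα g y hy) ≫
        (K'.mul x y hx hy hxy).hom = E hα g (x+y) hxy := by
  rw [← h, Iso.inv_hom_id_assoc]

lemma memAdd {a b : ℝ} (ha : a ∈ Set.Ici (0:ℝ)) (hb : b ∈ Set.Ici (0:ℝ)) :
    a + b ∈ Set.Ici (0:ℝ) :=
  Set.mem_Ici.2 (add_nonneg (Set.mem_Ici.1 ha) (Set.mem_Ici.1 hb))

lemma P_mid (c p b : ℝ) (hc : c ∈ Set.Ici (0:ℝ)) (hp : p ∈ Set.Ici (0:ℝ))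
    (hb : b ∈ Set.Ici (0:ℝ)) (hpb : p + b = α) (hcp : c + p ≤ α) (hcpmem hcpbmem) :
    (K.mul (c+p) b hcpmem hb hcpbmem).hom ≫ E hα g ((c+p)+b) hcpbmem =
      MonoidalCategoryStruct.tensorHom (E hα g (c+p) hcpmem) (E hα g b hb) ≫
        (K'.mul (c+p) b hcpmem hb hcpbmem).hom := by
  have e1 := conj_of_P hα g (P_small hα g c p hc hp hcpmem hcp)
  have e2 := conj_of_P hα g (P_small hα g p b hp hb (memAdd hp hb) (le_of_eq hpb))
  have e3 := conj_of_P hα g (P_alpha hα g c hc (memAdd hc (mem2 hα)))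
  rw [← Iso.eq_inv_comp]
  conv_rhs => rw [← e1]
  rw [conj_assoc c p b hc hp hb hcpmem (memAdd hp hb) hcpbmem (memAdd hc (memAdd hp hb))
    (E hα g c hc) (E hα g p hp) (E hα g b hb)]
  rw [e2]
  rw [E_congr hα g hpb (memAdd hp hb) (mem2 hα)]
  rw [mul_inv_congr K rfl hpb hc (memAdd hp hb) (memAdd hc (memAdd hp hb)) hc (mem2 hα)
    (memAdd hc (mem2 hα))]
  rw [mul_congr K' rfl hpb hc (memAdd hp hb) (memAdd hc (memAdd hp hb)) hc (mem2 hα)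
    (memAdd hc (mem2 hα))]
  rw [tensor_congr_right]
  simp only [Category.assoc, eqToHom_trans, eqToHom_refl, Category.comp_id, Category.id_comp,
    eqToHom_trans_assoc, eqToHom_tensor_id, id_tensor_eqToHom]
  rw [E_congr hα g (show (c+p)+b = c + α by rw [← hpb]; ring) hcpbmem (memAdd hc (mem2 hα))]
  rw [← e3]
  simp [eqToHom_tensor_id, id_tensor_eqToHom, eqToHom_trans_assoc]

lemma P_step (c b : ℝ) (hc : c ∈ Set.Ici (0:ℝ)) (hb : b ∈ Set.Ici (0:ℝ))
    (IH1 : (K.mul c b hc hb (memAdd hc hb)).hom ≫ E hα g (c+b) (memAdd hc hb) =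
      MonoidalCategoryStruct.tensorHom (E hα g c hc) (E hα g b hb) ≫
        (K'.mul c b hc hb (memAdd hc hb)).hom)
    (IH2 : (K.mul α b (mem2 hα) hb (memAdd (mem2 hα) hb)).hom ≫
        E hα g (α+b) (memAdd (mem2 hα) hb) =
      MonoidalCategoryStruct.tensorHom (E hα g α (mem2 hα)) (E hα g b hb) ≫
        (K'.mul α b (mem2 hα) hb (memAdd (mem2 hα) hb)).hom)
    (hca : c + α ∈ Set.Ici (0:ℝ)) (hcab : (c + α) + b ∈ Set.Ici (0:ℝ)) :
    (K.mul (c+α) b hca hb hcab).hom ≫ E hα g ((c+α)+b) hcab =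
      MonoidalCategoryStruct.tensorHom (E hα g (c+α) hca) (E hα g b hb) ≫
        (K'.mul (c+α) b hca hb hcab).hom := by
  have e3 := conj_of_P hα g (P_alpha hα g c hc (memAdd hc (mem2 hα)))
  have e4 := conj_of_P hα g (P_alpha hα g (c+b) (memAdd hc hb)
    (memAdd (memAdd hc hb) (mem2 hα)))
  have e5 := conj_of_P hα g (P_alpha hα g b hb (memAdd hb (mem2 hα)))
  have e1 := conj_of_P hα g IH1
  have e2 := conj_of_P hα g IH2
  rw [← Iso.eq_inv_comp]
  conv_rhs => rw [← e3]
  rw [conj_assoc c α b hc (mem2 hα) hb hca (memAdd (mem2 hα) hb) hcab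
    (memAdd hc (memAdd (mem2 hα) hb)) (E hα g c hc) (E hα g α (mem2 hα)) (E hα g b hb)]
  rw [e2]
  -- left hand side
  rw [E_congr hα g (show (c+α)+b = (c+b)+α by ring) hcab (memAdd (memAdd hc hb) (mem2 hα))]
  rw [← e4]
  conv_lhs => rw [← e1]
  rw [conj_assoc c b α hc hb (mem2 hα) (memAdd hc hb) (memAdd hb (mem2 hα))
    (memAdd (memAdd hc hb) (mem2 hα)) (memAdd hc (memAdd hb (mem2 hα)))
    (E hα g c hc) (E hα g b hb) (E hα g α (mem2 hα))]
  rw [e5]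
  rw [E_congr hα g (add_comm b α) (memAdd hb (mem2 hα)) (memAdd (mem2 hα) hb)]
  rw [mul_inv_congr K rfl (add_comm b α) hc (memAdd hb (mem2 hα))
    (memAdd hc (memAdd hb (mem2 hα))) hc (memAdd (mem2 hα) hb)
    (memAdd hc (memAdd (mem2 hα) hb))]
  rw [mul_congr K' rfl (add_comm b α) hc (memAdd hb (mem2 hα))
    (memAdd hc (memAdd hb (mem2 hα))) hc (memAdd (mem2 hα) hb)
    (memAdd hc (memAdd (mem2 hα) hb))]
  rw [tensor_congr_right]
  simp [eqToHom_tensor_id, id_tensor_eqToHom, eqToHom_trans_assoc, eqToHom_trans]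

lemma M1 : ∀ (n : ℕ) (a : ℝ) (ha : a ∈ Set.Ici (0:ℝ)) (hna : a ≤ n * α)
    (b : ℝ) (hb : b ∈ Set.Ici (0:ℝ)) (hbα : b ≤ α) (hab : a + b ∈ Set.Ici (0:ℝ)),
    (K.mul a b ha hb hab).hom ≫ E hα g (a+b) hab =
      MonoidalCategoryStruct.tensorHom (E hα g a ha) (E hα g b hb) ≫
        (K'.mul a b ha hb hab).hom := by
  intro n
  induction n with
  | zero =>
    intro a ha hna b hb hbα hab
    have h0 : a ≤ 0 := by simpa using hna
    exact P_small hα g a b ha hb hab (by have := Set.mem_Ici.1 ha; linarith)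
  | succ n IH =>
    intro a ha hna b hb hbα hab
    by_cases hs : a + b ≤ α
    · exact P_small hα g a b ha hb hab hs
    by_cases haα : a ≤ α
    · obtain ⟨c, p, hc, hp, hpb, rfl⟩ :
          ∃ c p, c ∈ Set.Ici (0:ℝ) ∧ p ∈ Set.Ici (0:ℝ) ∧ p + b = α ∧ a = c + p := by
        refine ⟨a + b - α, α - b, Set.mem_Ici.2 (by have := not_le.1 hs; linarith),
          Set.mem_Ici.2 (by linarith), by ring, by ring⟩
      exact P_mid hα g c p b hc hp hb hpb haα ha hab
    · cases n with
      | zero =>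
        exact absurd (by simpa using hna) haα
      | succ n =>
        obtain ⟨c, hc, rfl⟩ : ∃ c, c ∈ Set.Ici (0:ℝ) ∧ a = c + α := by
          refine ⟨a - α, Set.mem_Ici.2 (by have := not_le.1 haα; linarith), by ring⟩
        have hcb : c ≤ (n+1 : ℕ) * α := by push_cast at hna ⊢; linarith
        have hαb : α ≤ (n+1 : ℕ) * α := by push_cast; nlinarith
        exact P_step hα g c b hc hb
          (IH c hc hcb b hb hbα (memAdd hc hb))
          (IH α (mem2 hα) hαb b hb hbα (memAdd (mem2 hα) hb)) ha hab

lemma M2 : ∀ (m : ℕ) (b : ℝ) (hb : b ∈ Set.Ici (0:ℝ)) (hmb : b ≤ m * α)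
    (a : ℝ) (ha : a ∈ Set.Ici (0:ℝ)) (hab : a + b ∈ Set.Ici (0:ℝ)),
    (K.mul a b ha hb hab).hom ≫ E hα g (a+b) hab =
      MonoidalCategoryStruct.tensorHom (E hα g a ha) (E hα g b hb) ≫
        (K'.mul a b ha hb hab).hom := by
  intro m
  induction m with
  | zero =>
    intro b hb hmb a ha hab
    exact M1 hα g ⌈a / α⌉₊ a ha (ceil_bound hα a) b hb
      (by have := Set.mem_Ici.1 hb; simp at hmb; nlinarith) hab
  | succ m IH =>
    intro b hb hmb a ha hab
    by_cases hbα : b ≤ α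
    · exact M1 hα g ⌈a / α⌉₊ a ha (ceil_bound hα a) b hb hbα hab
    · obtain ⟨d, hd, rfl⟩ : ∃ d, d ∈ Set.Ici (0:ℝ) ∧ b = d + α := by
        refine ⟨b - α, Set.mem_Ici.2 (by have := not_le.1 hbα; linarith), by ring⟩
      have hdb : d ≤ (m : ℕ) * α := by push_cast at hmb ⊢; linarith
      have e0 := conj_of_P hα g (P_alpha hα g d hd (memAdd hd (mem2 hα)))
      rw [← Iso.eq_inv_comp]
      conv_rhs => rw [← e0]
      rw [E_congr hα g (show a+(d+α) = (a+d)+α by ring) hab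
        (memAdd (memAdd ha hd) (mem2 hα))]
      rw [← conj_of_P hα g (P_alpha hα g (a+d) (memAdd ha hd)
        (memAdd (memAdd ha hd) (mem2 hα)))]
      conv_lhs => rw [← conj_of_P hα g (IH d hd hdb a ha (memAdd ha hd))]
      rw [conj_assoc a d α ha hd (mem2 hα) (memAdd ha hd) (memAdd hd (mem2 hα))
        (memAdd (memAdd ha hd) (mem2 hα)) (memAdd ha (memAdd hd (mem2 hα)))
        (E hα g a ha) (E hα g d hd) (E hα g α (mem2 hα))]
      simp [eqToHom_trans_assoc, eqToHom_trans, eqToHom_refl]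

lemma E_monoidal (a b : ℝ) (ha : a ∈ Set.Ici (0:ℝ)) (hb : b ∈ Set.Ici (0:ℝ))
    (hab : a + b ∈ Set.Ici (0:ℝ)) :
    (K.mul a b ha hb hab).hom ≫ E hα g (a+b) hab =
      MonoidalCategoryStruct.tensorHom (E hα g a ha) (E hα g b hb) ≫
        (K'.mul a b ha hb hab).hom :=
  M2 hα g ⌈b / α⌉₊ b hb (ceil_bound hα b) a ha hab

lemma mem0 : (0:ℝ) ∈ Set.Ici (0:ℝ) := Set.mem_Ici.2 le_rfl

lemma N_red (a d : ℝ) (ha : a ∈ Set.Ici (0:ℝ)) (hd : d ∈ Set.Ici (0:ℝ))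
    (h : K.res 0 d mem0 hd (Set.mem_Ici.1 hd) ≫ E hα g 0 mem0 =
      E hα g d hd ≫ K'.res 0 d mem0 hd (Set.mem_Ici.1 hd))
    (had : a + d ∈ Set.Ici (0:ℝ)) (hle : a ≤ a + d) :
    K.res a (a+d) ha had hle ≫ E hα g a ha =
      E hα g (a+d) had ≫ K'.res a (a+d) ha had hle := by
  have hd0 : (0:ℝ) ≤ d := Set.mem_Ici.1 hd
  have hres : (K.mul a d ha hd had).hom ≫
        K.res (a+0) (a+d) (memAdd ha mem0) had (add_le_add le_rfl hd0) =
      MonoidalCategoryStruct.tensorHom (K.res a a ha ha le_rfl)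
        (K.res 0 d mem0 hd hd0) ≫ (K.mul a 0 ha mem0 (memAdd ha mem0)).hom :=
    K.mul_res a 0 a d ha mem0 ha hd (memAdd ha mem0) had le_rfl hd0
  have hres' : (K'.mul a d ha hd had).hom ≫
        K'.res (a+0) (a+d) (memAdd ha mem0) had (add_le_add le_rfl hd0) =
      MonoidalCategoryStruct.tensorHom (K'.res a a ha ha le_rfl)
        (K'.res 0 d mem0 hd hd0) ≫ (K'.mul a 0 ha mem0 (memAdd ha mem0)).hom :=
    K'.mul_res a 0 a d ha mem0 ha hd (memAdd ha mem0) had le_rfl hd0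
  rw [K.res_id] at hres
  rw [K'.res_id] at hres'
  -- express res a (a+d) via res (a+0) (a+d)
  rw [res_congr K (add_zero a).symm rfl ha (memAdd ha mem0) had had hle
    (add_le_add le_rfl hd0)]
  rw [← Iso.eq_inv_comp] at hres
  rw [hres]
  simp only [Category.assoc, eqToHom_refl, Category.id_comp]
  rw [app_congr (E hα g) (add_zero a).symm ha (memAdd ha mem0)]
  simp only [eqToHom_trans_assoc, eqToHom_refl, Category.id_comp]
  have em := E_monoidal hα g a 0 ha mem0 (memAdd ha mem0)
  try simp only [Category.assoc]
  slice_lhs 3 4 => rw [em]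
  slice_lhs 2 3 => rw [tensorHom_comp_tensorHom, Category.id_comp, h]
  rw [show MonoidalCategoryStruct.tensorHom (E hα g a ha)
      (E hα g d hd ≫ K'.res 0 d mem0 hd hd0)
    = MonoidalCategoryStruct.tensorHom (E hα g a ha) (E hα g d hd) ≫
      MonoidalCategoryStruct.tensorHom (𝟙 (K'.obj a ha)) (K'.res 0 d mem0 hd hd0) from by
        rw [tensorHom_comp_tensorHom]; simp]
  try simp only [Category.assoc]
  slice_lhs 3 4 => rw [← hres']
  slice_lhs 1 3 => rw [conj_of_P hα g (E_monoidal hα g a d ha hd had)]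
  rw [res_congr K' (add_zero a).symm rfl ha (memAdd ha mem0) had had hle
    (add_le_add le_rfl hd0)]
  simp

lemma N_small (d : ℝ) (hd : d ∈ Set.Ici (0:ℝ)) (hdα : d ≤ α) :
    K.res 0 d mem0 hd (Set.mem_Ici.1 hd) ≫ E hα g 0 mem0 =
      E hα g d hd ≫ K'.res 0 d mem0 hd (Set.mem_Ici.1 hd) := by
  rw [E_small hα g 0 mem0 hα.le, E_small hα g d hd hdα]
  exact g.naturality 0 d ⟨mem0, hα.le⟩ ⟨hd, hdα⟩ (Set.mem_Ici.1 hd)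

lemma N0 : ∀ (n : ℕ) (d : ℝ) (hd : d ∈ Set.Ici (0:ℝ)) (hnd : d ≤ n * α),
    K.res 0 d mem0 hd (Set.mem_Ici.1 hd) ≫ E hα g 0 mem0 =
      E hα g d hd ≫ K'.res 0 d mem0 hd (Set.mem_Ici.1 hd) := by
  intro n
  induction n with
  | zero =>
    intro d hd hnd
    exact N_small hα g d hd (by simp at hnd; linarith)
  | succ n IH =>
    intro d hd hnd
    by_cases hdα : d ≤ α
    · exact N_small hα g d hd hdα
    · obtain ⟨c, hc, rfl⟩ : ∃ c, c ∈ Set.Ici (0:ℝ) ∧ d = c + α := by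
        refine ⟨d - α, Set.mem_Ici.2 (by have := not_le.1 hdα; linarith), by ring⟩
      have h1 : (0:ℝ) ≤ c := Set.mem_Ici.1 hc
      have h2 : c ≤ c + α := by linarith
      rw [← K.res_comp 0 c (c+α) mem0 hc hd h1 h2, Category.assoc,
        IH c hc (by push_cast at hnd ⊢; linarith)]
      rw [← Category.assoc, N_red hα g c α hc (mem2 hα) (N_small hα g α (mem2 hα) le_rfl)
        hd h2, Category.assoc, K'.res_comp]

lemma E_natural (a b : ℝ) (ha : a ∈ Set.Ici (0:ℝ)) (hb : b ∈ Set.Ici (0:ℝ)) (hab : a ≤ b) :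
    K.res a b ha hb hab ≫ E hα g a ha = E hα g b hb ≫ K'.res a b ha hb hab := by
  obtain ⟨d, hd, rfl⟩ : ∃ d, d ∈ Set.Ici (0:ℝ) ∧ b = a + d := by
    refine ⟨b - a, Set.mem_Ici.2 (by linarith), by ring⟩
  exact N_red hα g a d ha hd (N0 hα g ⌈d / α⌉₊ d hd (ceil_bound hα d)) hb hab

include hα in
lemma app_determined (f f' : MonoidalPresheaf.Hom K K')
    (hres : ∀ (a : ℝ) (ha : a ∈ Set.Ici (0:ℝ)), a ≤ α → f.app a ha = f'.app a ha) :
    ∀ (n : ℕ) (a : ℝ) (ha : a ∈ Set.Ici (0:ℝ)), a ≤ n * α → f.app a ha = f'.app a ha := by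
  intro n
  induction n with
  | zero =>
    intro a ha h
    exact hres a ha (by simp at h; linarith)
  | succ n IH =>
    intro a ha h
    by_cases haα : a ≤ α
    · exact hres a ha haα
    · obtain ⟨c, hc, rfl⟩ : ∃ c, c ∈ Set.Ici (0:ℝ) ∧ a = c + α := by
        refine ⟨a - α, Set.mem_Ici.2 (by have := not_le.1 haα; linarith), by ring⟩
      have hf := f.monoidal c α hc (mem2 hα) ha
      have hf' := f'.monoidal c α hc (mem2 hα) ha
      rw [← Iso.eq_inv_comp] at hf hf'
      have hcb : c ≤ (n:ℕ) * α := by push_cast at h ⊢; linarith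
      rw [hf, hf', IH c hc hcb, hres α (mem2 hα) le_rfl]

end Aux

end MonoidalPresheaf


/-- The restriction functor `Fun^⊗(ℝ_{≥0}^op, C) ⥤ Fun^⊗([0,α]^op, C)`
is fully faithful: for any two monoidal presheaves `𝒦, 𝒦'` on `ℝ_{≥0}`, restriction of
morphisms is a bijection on Hom-sets. -/
theorem restrictFunctor_map_bijective (C : Type u) [Category.{v} C] [MonoidalCategory C]
    (α : ℝ) (hα : 0 < α) (K K' : MonoidalPresheaf C (Set.Ici (0 : ℝ))) :
    Function.Bijective (fun f : K ⟶ K' =>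
      (MonoidalPresheaf.restrictFunctor C
        (show Set.Icc (0 : ℝ) α ⊆ Set.Ici 0 from fun _ hx => hx.1)).map f) := by
  constructor
  · intro f f' hff
    apply MonoidalPresheaf.Hom.ext
    funext a ha
    have hres : ∀ (b : ℝ) (hb : b ∈ Set.Ici (0:ℝ)), b ≤ α →
        MonoidalPresheaf.Hom.app f b hb = MonoidalPresheaf.Hom.app f' b hb := by
      intro b hb hbα
      exact congrFun (congrFun (congrArg MonoidalPresheaf.Hom.app hff) b) ⟨hb, hbα⟩
    exact MonoidalPresheaf.app_determined hα f f' hres ⌈a / α⌉₊ a ha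
      (MonoidalPresheaf.ceil_bound hα a)
  · intro g
    refine ⟨⟨MonoidalPresheaf.E hα g,
      fun a b ha hb hab => MonoidalPresheaf.E_natural hα g a b ha hb hab,
      fun a b ha hb hab => MonoidalPresheaf.E_monoidal hα g a b ha hb hab⟩, ?_⟩
    apply MonoidalPresheaf.Hom.ext
    funext a ha
    exact MonoidalPresheaf.E_small hα g a _ ha.2
end

section
/- Let (C, ⊗, 1) be a monoidal category, α > 0, and let K_I be a monoidal presheaf on [0,α] with values in C. Given two monoidal presheaves 𝒦_1, 𝒦_2 on ℝ_{≥0} with values in C and isomorphisms of monoidal presheaves θ : 𝒦_1|_{[0,α]} ≅ K_I and θ' : 𝒦_2|_{[0,α]} ≅ K_I, there exists a unique isomorphism of monoidal presheaves λ : 𝒦_1 ≅ 𝒦_2 such that λ|_{[0,α]} = θ'^{-1} ∘ θ. -/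
open CategoryTheory MonoidalCategory

universe v u

section Statement4

open MonoidalPresheaf

variable {C : Type u} [Category.{v} C] [MonoidalCategory C]

/-- Bundled gluing data: two monoidal presheaves on `ℝ≥0` together with a compatible
family of isomorphisms between their restrictions to `[0, α]`. -/
structure Glue (C : Type u) [Category.{v} C] [MonoidalCategory C] (α : ℝ) where
  pos : 0 < α
  K₁ : MonoidalPresheaf C (Set.Ici (0 : ℝ))
  K₂ : MonoidalPresheaf C (Set.Ici (0 : ℝ))
  t : ∀ (a : ℝ) (ha : a ∈ Set.Ici (0 : ℝ)), a ≤ α → (K₁.obj a ha ≅ K₂.obj a ha)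
  tnat : ∀ (a b : ℝ) (ha : a ∈ Set.Ici (0 : ℝ)) (hb : b ∈ Set.Ici (0 : ℝ))
      (haα : a ≤ α) (hbα : b ≤ α) (hab : a ≤ b),
      K₁.res a b ha hb hab ≫ (t a ha haα).hom = (t b hb hbα).hom ≫ K₂.res a b ha hb hab
  tmul : ∀ (a b : ℝ) (ha : a ∈ Set.Ici (0 : ℝ)) (hb : b ∈ Set.Ici (0 : ℝ))
      (hab : a + b ∈ Set.Ici (0 : ℝ)) (haα : a ≤ α) (hbα : b ≤ α) (habα : a + b ≤ α),
      (K₁.mul a b ha hb hab).hom ≫ (t (a + b) hab habα).hom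
        = ((t a ha haα).hom ⊗ₘ (t b hb hbα).hom) ≫ (K₂.mul a b ha hb hab).hom

variable {α : ℝ}

namespace Glue

/-- The extension of `t` to all of `ℝ≥0`. -/
noncomputable def ext (G : Glue C α) (a : ℝ) (ha : a ∈ Set.Ici (0 : ℝ)) :
    G.K₁.obj a ha ≅ G.K₂.obj a ha :=
  if h : a ≤ α then G.t a ha h
  else
    have hpos : 0 < α := G.pos
    have hmem : α ∈ Set.Ici (0 : ℝ) := Set.mem_Ici.mpr G.pos.le
    have ha' : a - α ∈ Set.Ici (0 : ℝ) := by
      simp only [Set.mem_Ici] at *; push_neg at h; linarith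
    have hs : α + (a - α) ∈ Set.Ici (0 : ℝ) := by
      simp only [Set.mem_Ici] at *; linarith
    eqToIso (objCongr G.K₁.obj (show a = α + (a - α) by ring) ha hs) ≪≫
      (G.K₁.mul α (a - α) hmem ha' hs).symm ≪≫
      (tensorIso (G.t α hmem le_rfl) (G.ext (a - α) ha')) ≪≫
      G.K₂.mul α (a - α) hmem ha' hs ≪≫
      eqToIso (objCongr G.K₂.obj (show α + (a - α) = a by ring) hs ha)
termination_by Nat.ceil (a / α)
decreasing_by
  push_neg at h
  have h1 : (1 : ℝ) < a / α := (one_lt_div hpos).mpr h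
  have hn : 1 < Nat.ceil (a / α) := by
    rw [Nat.lt_ceil]; exact_mod_cast h1
  have hle : (a - α) / α ≤ ((Nat.ceil (a / α) - 1 : ℕ) : ℝ) := by
    have h2 := Nat.le_ceil (a / α)
    rw [Nat.cast_sub hn.le, sub_div, div_self hpos.ne']
    push_cast
    linarith
  calc Nat.ceil ((a - α) / α) ≤ Nat.ceil (a / α) - 1 := Nat.ceil_le.mpr hle
    _ < Nat.ceil (a / α) := by omega

variable (G : Glue C α)

lemma ext_of_le (a : ℝ) (ha : a ∈ Set.Ici (0 : ℝ)) (h : a ≤ α) :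
    G.ext a ha = G.t a ha h := by
  rw [ext, dif_pos h]

lemma ext_of_gt (a : ℝ) (ha : a ∈ Set.Ici (0 : ℝ)) (h : α < a)
    (hmem : α ∈ Set.Ici (0 : ℝ)) (ha' : a - α ∈ Set.Ici (0 : ℝ))
    (hs : α + (a - α) ∈ Set.Ici (0 : ℝ)) :
    (G.ext a ha).hom =
      eqToHom (objCongr G.K₁.obj (show a = α + (a - α) by ring) ha hs) ≫
        (G.K₁.mul α (a - α) hmem ha' hs).inv ≫
        ((G.t α hmem le_rfl).hom ⊗ₘ (G.ext (a - α) ha').hom) ≫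
        (G.K₂.mul α (a - α) hmem ha' hs).hom ≫
        eqToHom (objCongr G.K₂.obj (show α + (a - α) = a by ring) hs ha) := by
  rw [ext, dif_neg (not_le.mpr h)]
  simp

lemma ext_congr {x y : ℝ} (h : x = y) (hx : x ∈ Set.Ici (0 : ℝ)) (hy : y ∈ Set.Ici (0 : ℝ)) :
    (G.ext x hx).hom = eqToHom (objCongr G.K₁.obj h hx hy) ≫ (G.ext y hy).hom ≫
      eqToHom (objCongr G.K₂.obj h.symm hy hx) := by
  subst h; simp

lemma ext_congr' {x y : ℝ} (h : x = y) (hx : x ∈ Set.Ici (0 : ℝ)) (hy : y ∈ Set.Ici (0 : ℝ)) :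
    eqToHom (objCongr G.K₁.obj h hx hy) ≫ (G.ext y hy).hom
      = (G.ext x hx).hom ≫ eqToHom (objCongr G.K₂.obj h hx hy) := by
  subst h; simp

/-- The multiplicativity property of the extension, as a predicate. -/
def M (a b : ℝ) (ha : a ∈ Set.Ici (0 : ℝ)) (hb : b ∈ Set.Ici (0 : ℝ))
    (hab : a + b ∈ Set.Ici (0 : ℝ)) : Prop :=
  (G.K₁.mul a b ha hb hab).hom ≫ (G.ext (a + b) hab).hom
    = ((G.ext a ha).hom ⊗ₘ (G.ext b hb).hom) ≫ (G.K₂.mul a b ha hb hab).hom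

lemma M_congr {a b a' b' : ℝ} (ea : a = a') (eb : b = b')
    (ha : a ∈ Set.Ici (0 : ℝ)) (hb : b ∈ Set.Ici (0 : ℝ)) (hab : a + b ∈ Set.Ici (0 : ℝ))
    (ha' : a' ∈ Set.Ici (0 : ℝ)) (hb' : b' ∈ Set.Ici (0 : ℝ))
    (hab' : a' + b' ∈ Set.Ici (0 : ℝ)) :
    G.M a b ha hb hab ↔ G.M a' b' ha' hb' hab' := by
  subst ea; subst eb; rfl

lemma M_of_eq {a b a' b' : ℝ} (ea : a = a') (eb : b = b')
    {ha : a ∈ Set.Ici (0 : ℝ)} {hb : b ∈ Set.Ici (0 : ℝ)} {hab : a + b ∈ Set.Ici (0 : ℝ)}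
    {ha' : a' ∈ Set.Ici (0 : ℝ)} {hb' : b' ∈ Set.Ici (0 : ℝ)}
    {hab' : a' + b' ∈ Set.Ici (0 : ℝ)} (h : G.M a b ha hb hab) :
    G.M a' b' ha' hb' hab' := by
  subst ea; subst eb; exact h

lemma M_low (a b : ℝ) (ha : a ∈ Set.Ici (0 : ℝ)) (hb : b ∈ Set.Ici (0 : ℝ))
    (hab : a + b ∈ Set.Ici (0 : ℝ)) (haα : a ≤ α) (hbα : b ≤ α) (habα : a + b ≤ α) :
    G.M a b ha hb hab := by
  unfold M
  rw [G.ext_of_le a ha haα, G.ext_of_le b hb hbα, G.ext_of_le (a + b) hab habα]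
  exact G.tmul a b ha hb hab haα hbα habα

/-- The base multiplicativity: splitting off an `α` on the left, valid for all `a ≥ α`. -/
lemma M_base (a : ℝ) (ha : a ∈ Set.Ici (0 : ℝ)) (hαa : α ≤ a)
    (hmem : α ∈ Set.Ici (0 : ℝ)) (ha' : a - α ∈ Set.Ici (0 : ℝ))
    (hs : α + (a - α) ∈ Set.Ici (0 : ℝ)) :
    G.M α (a - α) hmem ha' hs := by
  rcases eq_or_lt_of_le hαa with heq | hlt
  · exact G.M_low α (a - α) hmem ha' hs le_rfl (by have := G.pos; linarith) (by linarith)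
  · unfold M
    rw [G.ext_congr (show α + (a - α) = a by ring) hs ha,
      G.ext_of_gt a ha hlt hmem ha' hs, G.ext_of_le α hmem le_rfl]
    simp

lemma ext_hom_eq {a b : ℝ} {ha : a ∈ Set.Ici (0 : ℝ)} {hb : b ∈ Set.Ici (0 : ℝ)}
    {hab : a + b ∈ Set.Ici (0 : ℝ)} (h : G.M a b ha hb hab) :
    (G.ext (a + b) hab).hom = (G.K₁.mul a b ha hb hab).inv ≫
      ((G.ext a ha).hom ⊗ₘ (G.ext b hb).hom) ≫ (G.K₂.mul a b ha hb hab).hom := by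
  rw [← h]; simp

lemma mul_inv_ext {b c : ℝ} {hb : b ∈ Set.Ici (0 : ℝ)} {hc : c ∈ Set.Ici (0 : ℝ)}
    {hbc : b + c ∈ Set.Ici (0 : ℝ)} (h3 : G.M b c hb hc hbc) :
    (G.K₁.mul b c hb hc hbc).inv ≫ ((G.ext b hb).hom ⊗ₘ (G.ext c hc).hom)
      = (G.ext (b + c) hbc).hom ≫ (G.K₂.mul b c hb hc hbc).inv := by
  rw [Iso.inv_comp_eq, reassoc_of% h3]
  simp

lemma M_rotate (a b c : ℝ) (ha : a ∈ Set.Ici (0 : ℝ)) (hb : b ∈ Set.Ici (0 : ℝ))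
    (hc : c ∈ Set.Ici (0 : ℝ)) (hab : a + b ∈ Set.Ici (0 : ℝ))
    (hbc : b + c ∈ Set.Ici (0 : ℝ)) (habc : a + b + c ∈ Set.Ici (0 : ℝ))
    (habc' : a + (b + c) ∈ Set.Ici (0 : ℝ))
    (h1 : G.M a b ha hb hab) (h2 : G.M (a + b) c hab hc habc) (h3 : G.M b c hb hc hbc) :
    G.M a (b + c) ha hbc habc' := by
  have A₁ : (G.K₁.mul a (b + c) ha hbc habc').hom
      = (𝟙 _ ⊗ₘ (G.K₁.mul b c hb hc hbc).inv) ≫ (α_ _ _ _).inv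
        ≫ ((G.K₁.mul a b ha hb hab).hom ⊗ₘ 𝟙 _) ≫ (G.K₁.mul (a + b) c hab hc habc).hom
        ≫ eqToHom (objCongr G.K₁.obj (add_assoc a b c) habc habc') := by
    rw [← G.K₁.assoc a b c ha hb hc hab hbc habc habc']
    simp
  have A₂ : (𝟙 _ ⊗ₘ (G.K₂.mul b c hb hc hbc).inv) ≫ (α_ _ _ _).inv
        ≫ ((G.K₂.mul a b ha hb hab).hom ⊗ₘ 𝟙 _) ≫ (G.K₂.mul (a + b) c hab hc habc).hom
        ≫ eqToHom (objCongr G.K₂.obj (add_assoc a b c) habc habc')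
      = (G.K₂.mul a (b + c) ha hbc habc').hom := by
    rw [← G.K₂.assoc a b c ha hb hc hab hbc habc habc']
    simp
  unfold M
  rw [A₁, ← A₂]
  simp only [Category.assoc]
  rw [G.ext_congr' (add_assoc a b c) habc habc', reassoc_of% h2,
    G.ext_hom_eq h1]
  rw [tensorHom_comp_tensorHom_assoc]
  simp only [Category.id_comp, Iso.hom_inv_id_assoc]
  rw [show (((G.ext a ha).hom ⊗ₘ (G.ext b hb).hom) ≫ (G.K₂.mul a b ha hb hab).hom
        ⊗ₘ (G.ext c hc).hom)
      = (((G.ext a ha).hom ⊗ₘ (G.ext b hb).hom) ⊗ₘ (G.ext c hc).hom)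
          ≫ ((G.K₂.mul a b ha hb hab).hom ⊗ₘ 𝟙 _) by rw [tensorHom_comp_tensorHom]; simp]
  simp only [Category.assoc]
  rw [← associator_inv_naturality_assoc, tensorHom_comp_tensorHom_assoc, G.mul_inv_ext h3,
    Category.id_comp]
  rw [show ((G.ext a ha).hom ⊗ₘ (G.ext (b + c) hbc).hom ≫ (G.K₂.mul b c hb hc hbc).inv)
      = ((G.ext a ha).hom ⊗ₘ (G.ext (b + c) hbc).hom) ≫ (𝟙 _ ⊗ₘ (G.K₂.mul b c hb hc hbc).inv)
      by rw [tensorHom_comp_tensorHom]; simp]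
  simp only [Category.assoc]

lemma M_rotate' (a b c : ℝ) (ha : a ∈ Set.Ici (0 : ℝ)) (hb : b ∈ Set.Ici (0 : ℝ))
    (hc : c ∈ Set.Ici (0 : ℝ)) (hab : a + b ∈ Set.Ici (0 : ℝ))
    (hbc : b + c ∈ Set.Ici (0 : ℝ)) (habc : a + b + c ∈ Set.Ici (0 : ℝ))
    (habc' : a + (b + c) ∈ Set.Ici (0 : ℝ))
    (h3 : G.M b c hb hc hbc) (h2 : G.M a (b + c) ha hbc habc') (h1 : G.M a b ha hb hab) :
    G.M (a + b) c hab hc habc := by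
  have A₁ : (G.K₁.mul (a + b) c hab hc habc).hom
      = ((G.K₁.mul a b ha hb hab).inv ⊗ₘ 𝟙 _) ≫ (α_ _ _ _).hom
        ≫ (𝟙 _ ⊗ₘ (G.K₁.mul b c hb hc hbc).hom) ≫ (G.K₁.mul a (b + c) ha hbc habc').hom
        ≫ eqToHom (objCongr G.K₁.obj (add_assoc a b c).symm habc' habc) := by
    rw [reassoc_of% (G.K₁.assoc a b c ha hb hc hab hbc habc habc')]
    simp
  have A₂ : ((G.K₂.mul a b ha hb hab).inv ⊗ₘ 𝟙 _) ≫ (α_ _ _ _).hom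
        ≫ (𝟙 _ ⊗ₘ (G.K₂.mul b c hb hc hbc).hom) ≫ (G.K₂.mul a (b + c) ha hbc habc').hom
        ≫ eqToHom (objCongr G.K₂.obj (add_assoc a b c).symm habc' habc)
      = (G.K₂.mul (a + b) c hab hc habc).hom := by
    rw [reassoc_of% (G.K₂.assoc a b c ha hb hc hab hbc habc habc')]
    simp
  unfold M
  rw [A₁, ← A₂]
  simp only [Category.assoc]
  rw [G.ext_congr' (add_assoc a b c).symm habc' habc, reassoc_of% h2, G.ext_hom_eq h3]
  rw [tensorHom_comp_tensorHom_assoc, Category.id_comp, Iso.hom_inv_id_assoc]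
  rw [show ((G.ext a ha).hom ⊗ₘ ((G.ext b hb).hom ⊗ₘ (G.ext c hc).hom)
        ≫ (G.K₂.mul b c hb hc hbc).hom)
      = ((G.ext a ha).hom ⊗ₘ ((G.ext b hb).hom ⊗ₘ (G.ext c hc).hom))
          ≫ (𝟙 _ ⊗ₘ (G.K₂.mul b c hb hc hbc).hom) by rw [tensorHom_comp_tensorHom]; simp]
  simp only [Category.assoc]
  rw [← associator_naturality_assoc, tensorHom_comp_tensorHom_assoc, G.mul_inv_ext h1,
    Category.id_comp]
  rw [show ((G.ext (a + b) hab).hom ≫ (G.K₂.mul a b ha hb hab).inv ⊗ₘ (G.ext c hc).hom)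
      = ((G.ext (a + b) hab).hom ⊗ₘ (G.ext c hc).hom)
          ≫ ((G.K₂.mul a b ha hb hab).inv ⊗ₘ 𝟙 _) by rw [tensorHom_comp_tensorHom]; simp]
  simp only [Category.assoc]

lemma ceil_aux (hp : 0 < α) {a : ℝ} (h : α < a) :
    Nat.ceil ((a - α) / α) < Nat.ceil (a / α) := by
  have h1 : (1 : ℝ) < a / α := (one_lt_div hp).mpr h
  have hn : 1 < Nat.ceil (a / α) := by rw [Nat.lt_ceil]; exact_mod_cast h1
  have hle : (a - α) / α ≤ ((Nat.ceil (a / α) - 1 : ℕ) : ℝ) := by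
    have h2 := Nat.le_ceil (a / α)
    rw [Nat.cast_sub hn.le, sub_div, div_self hp.ne']
    push_cast
    linarith
  calc Nat.ceil ((a - α) / α) ≤ Nat.ceil (a / α) - 1 := Nat.ceil_le.mpr hle
    _ < Nat.ceil (a / α) := by omega

/-- The base multiplicativity: splitting off an `α` on the right. -/
lemma M_base' (a : ℝ) (ha : a ∈ Set.Ici (0 : ℝ)) (hαa : α ≤ a)
    (ha' : a - α ∈ Set.Ici (0 : ℝ)) (hmem : α ∈ Set.Ici (0 : ℝ))
    (hs : a - α + α ∈ Set.Ici (0 : ℝ)) :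
    G.M (a - α) α ha' hmem hs := by
  have hp : 0 < α := G.pos
  have ha0 : (0 : ℝ) ≤ a := ha
  rcases le_or_gt a (2 * α) with h2 | h2
  · have m1 : G.M (a - α) (2 * α - a) ha' (Set.mem_Ici.mpr (by linarith))
        (Set.mem_Ici.mpr (by linarith)) :=
      G.M_low _ _ _ _ _ (by linarith) (by linarith) (by linarith)
    have m2 : G.M ((a - α) + (2 * α - a)) (a - α) (Set.mem_Ici.mpr (by linarith)) ha'
        (Set.mem_Ici.mpr (by linarith)) :=
      G.M_of_eq (show α = (a - α) + (2 * α - a) by ring) rfl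
        (G.M_base a ha hαa hmem ha' (Set.mem_Ici.mpr (by linarith)))
    have m3 : G.M (2 * α - a) (a - α) (Set.mem_Ici.mpr (by linarith)) ha'
        (Set.mem_Ici.mpr (by linarith)) :=
      G.M_low _ _ _ _ _ (by linarith) (by linarith) (by linarith)
    have key := G.M_rotate (a - α) (2 * α - a) (a - α) ha'
      (Set.mem_Ici.mpr (by linarith)) ha' (Set.mem_Ici.mpr (by linarith))
      (Set.mem_Ici.mpr (by linarith)) (Set.mem_Ici.mpr (by linarith))
      (Set.mem_Ici.mpr (by linarith)) m1 m2 m3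
    exact G.M_of_eq rfl (show (2 * α - a) + (a - α) = α by ring) key
  · have ih := M_base' (a - α) ha' (by linarith) (Set.mem_Ici.mpr (by linarith)) hmem
      (Set.mem_Ici.mpr (by linarith))
    have h3 : G.M (a - 2 * α) α (Set.mem_Ici.mpr (by linarith)) hmem
        (Set.mem_Ici.mpr (by linarith)) :=
      G.M_of_eq (show a - α - α = a - 2 * α by ring) rfl ih
    have h1 : G.M α (a - 2 * α) hmem (Set.mem_Ici.mpr (by linarith))
        (Set.mem_Ici.mpr (by linarith)) :=
      G.M_of_eq rfl (show a - α - α = a - 2 * α by ring)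
        (G.M_base (a - α) ha' (by linarith) hmem (Set.mem_Ici.mpr (by linarith))
          (Set.mem_Ici.mpr (by linarith)))
    have h2' : G.M α ((a - 2 * α) + α) hmem (Set.mem_Ici.mpr (by linarith))
        (Set.mem_Ici.mpr (by linarith)) :=
      G.M_of_eq rfl (show a - α = (a - 2 * α) + α by ring)
        (G.M_base a ha hαa hmem ha' (Set.mem_Ici.mpr (by linarith)))
    have key := G.M_rotate' α (a - 2 * α) α hmem (Set.mem_Ici.mpr (by linarith)) hmem
      (Set.mem_Ici.mpr (by linarith)) (Set.mem_Ici.mpr (by linarith))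
      (Set.mem_Ici.mpr (by linarith)) (Set.mem_Ici.mpr (by linarith)) h3 h2' h1
    exact G.M_of_eq (show α + (a - 2 * α) = a - α by ring) rfl key
termination_by Nat.ceil (a / α)
decreasing_by exact ceil_aux hp (by linarith)

/-- Full multiplicativity of the extension. -/
lemma M_all (n : ℕ) : ∀ (a b : ℝ) (ha : a ∈ Set.Ici (0 : ℝ)) (hb : b ∈ Set.Ici (0 : ℝ))
    (hab : a + b ∈ Set.Ici (0 : ℝ)), a + b ≤ n * α → G.M a b ha hb hab := by
  have hp : 0 < α := G.pos
  induction n with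
  | zero =>
    intro a b ha hb hab hle
    have ha0 : (0 : ℝ) ≤ a := ha
    have hb0 : (0 : ℝ) ≤ b := hb
    simp only [Nat.cast_zero, zero_mul] at hle
    exact G.M_low a b ha hb hab (by linarith) (by linarith) (by linarith)
  | succ n IH =>
    intro a b ha hb hab hle
    have ha0 : (0 : ℝ) ≤ a := ha
    have hb0 : (0 : ℝ) ≤ b := hb
    push_cast at hle
    rcases le_or_gt (a + b) α with hsum | hsum
    · exact G.M_low a b ha hb hab (by linarith) (by linarith) hsum
    rcases le_or_gt α a with haα | haα
    · -- split an `α` off `a` on the left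
      have h3 : G.M (a - α) b (Set.mem_Ici.mpr (by linarith)) hb
          (Set.mem_Ici.mpr (by linarith)) :=
        IH (a - α) b _ _ _ (by push_cast; linarith)
      have h1 : G.M α (a - α) (Set.mem_Ici.mpr hp.le) (Set.mem_Ici.mpr (by linarith))
          (Set.mem_Ici.mpr (by linarith)) :=
        G.M_base a ha haα _ _ _
      have h2' : G.M α ((a - α) + b) (Set.mem_Ici.mpr hp.le) (Set.mem_Ici.mpr (by linarith))
          (Set.mem_Ici.mpr (by linarith)) :=
        G.M_of_eq rfl (show a + b - α = (a - α) + b by ring)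
          (G.M_base (a + b) hab (by linarith) (Set.mem_Ici.mpr hp.le)
            (Set.mem_Ici.mpr (by linarith)) (Set.mem_Ici.mpr (by linarith)))
      have key := G.M_rotate' α (a - α) b (Set.mem_Ici.mpr hp.le)
        (Set.mem_Ici.mpr (by linarith)) hb (Set.mem_Ici.mpr (by linarith))
        (Set.mem_Ici.mpr (by linarith)) (Set.mem_Ici.mpr (by linarith))
        (Set.mem_Ici.mpr (by linarith)) h3 h2' h1
      exact G.M_of_eq (show α + (a - α) = a by ring) rfl key
    rcases le_or_gt α b with hbα | hbα
    · -- split an `α` off `b` on the right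
      have h1 : G.M a (b - α) ha (Set.mem_Ici.mpr (by linarith))
          (Set.mem_Ici.mpr (by linarith)) :=
        IH a (b - α) _ _ _ (by push_cast; linarith)
      have h2' : G.M (a + (b - α)) α (Set.mem_Ici.mpr (by linarith)) (Set.mem_Ici.mpr hp.le)
          (Set.mem_Ici.mpr (by linarith)) :=
        G.M_of_eq (show a + b - α = a + (b - α) by ring) rfl
          (G.M_base' (a + b) hab (by linarith) (Set.mem_Ici.mpr (by linarith))
            (Set.mem_Ici.mpr hp.le) (Set.mem_Ici.mpr (by linarith)))
      have h3 : G.M (b - α) α (Set.mem_Ici.mpr (by linarith)) (Set.mem_Ici.mpr hp.le)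
          (Set.mem_Ici.mpr (by linarith)) :=
        G.M_base' b hb hbα _ _ _
      have key := G.M_rotate a (b - α) α ha (Set.mem_Ici.mpr (by linarith))
        (Set.mem_Ici.mpr hp.le) (Set.mem_Ici.mpr (by linarith))
        (Set.mem_Ici.mpr (by linarith)) (Set.mem_Ici.mpr (by linarith))
        (Set.mem_Ici.mpr (by linarith)) h1 h2' h3
      exact G.M_of_eq rfl (show (b - α) + α = b by ring) key
    · -- both `a, b < α < a + b`
      have h1 : G.M a (α - a) ha (Set.mem_Ici.mpr (by linarith))
          (Set.mem_Ici.mpr (by linarith)) :=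
        G.M_low _ _ _ _ _ (by linarith) (by linarith) (by linarith)
      have h2' : G.M (a + (α - a)) (a + b - α) (Set.mem_Ici.mpr (by linarith))
          (Set.mem_Ici.mpr (by linarith)) (Set.mem_Ici.mpr (by linarith)) :=
        G.M_of_eq (show α = a + (α - a) by ring) rfl
          (G.M_base (a + b) hab (by linarith) (Set.mem_Ici.mpr hp.le)
            (Set.mem_Ici.mpr (by linarith)) (Set.mem_Ici.mpr (by linarith)))
      have h3 : G.M (α - a) (a + b - α) (Set.mem_Ici.mpr (by linarith))
          (Set.mem_Ici.mpr (by linarith)) (Set.mem_Ici.mpr (by linarith)) :=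
        G.M_low _ _ _ _ _ (by linarith) (by linarith) (by linarith)
      have key := G.M_rotate a (α - a) (a + b - α) ha (Set.mem_Ici.mpr (by linarith))
        (Set.mem_Ici.mpr (by linarith)) (Set.mem_Ici.mpr (by linarith))
        (Set.mem_Ici.mpr (by linarith)) (Set.mem_Ici.mpr (by linarith))
        (Set.mem_Ici.mpr (by linarith)) h1 h2' h3
      exact G.M_of_eq rfl (show (α - a) + (a + b - α) = b by ring) key

/-- Multiplicativity, unconditionally. -/
lemma M_any (a b : ℝ) (ha : a ∈ Set.Ici (0 : ℝ)) (hb : b ∈ Set.Ici (0 : ℝ))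
    (hab : a + b ∈ Set.Ici (0 : ℝ)) : G.M a b ha hb hab := by
  have hp : 0 < α := G.pos
  refine G.M_all (Nat.ceil ((a + b) / α)) a b ha hb hab ?_
  have := Nat.le_ceil ((a + b) / α)
  rw [div_le_iff₀ hp] at this
  linarith

lemma res_congr {I : Set ℝ} (K : MonoidalPresheaf C I)
    {a b a' b' : ℝ} (ea : a = a') (eb : b = b')
    (ha : a ∈ I) (hb : b ∈ I) (ha' : a' ∈ I) (hb' : b' ∈ I)
    (hab : a ≤ b) (hab' : a' ≤ b') :
    K.res a b ha hb hab
      = eqToHom (objCongr K.obj eb hb hb') ≫ K.res a' b' ha' hb' hab'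
          ≫ eqToHom (objCongr K.obj ea.symm ha' ha) := by
  subst ea; subst eb; simp

lemma N_step (c b : ℝ) (hc : c ∈ Set.Ici (0 : ℝ)) (hb : b ∈ Set.Ici (0 : ℝ))
    (hαc : α ≤ c) (hcb : c ≤ b)
    (mα : α ∈ Set.Ici (0 : ℝ)) (mc : c - α ∈ Set.Ici (0 : ℝ))
    (mb : b - α ∈ Set.Ici (0 : ℝ)) (msc : α + (c - α) ∈ Set.Ici (0 : ℝ))
    (msb : α + (b - α) ∈ Set.Ici (0 : ℝ)) (hsub : c - α ≤ b - α)
    (ih : G.K₁.res (c - α) (b - α) mc mb hsub ≫ (G.ext (c - α) mc).hom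
      = (G.ext (b - α) mb).hom ≫ G.K₂.res (c - α) (b - α) mc mb hsub) :
    G.K₁.res c b hc hb hcb ≫ (G.ext c hc).hom
      = (G.ext b hb).hom ≫ G.K₂.res c b hc hb hcb := by
  have R₁ : G.K₁.res (α + (c - α)) (α + (b - α)) msc msb (by linarith)
      = (G.K₁.mul α (b - α) mα mb msb).inv
        ≫ (𝟙 (G.K₁.obj α mα) ⊗ₘ G.K₁.res (c - α) (b - α) mc mb hsub)
        ≫ (G.K₁.mul α (c - α) mα mc msc).hom := by
    rw [← G.K₁.res_id α mα,
      ← G.K₁.mul_res α (c - α) α (b - α) mα mc mα mb msc msb le_rfl hsub,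
      Iso.inv_hom_id_assoc]
  have R₂ : G.K₂.res (α + (c - α)) (α + (b - α)) msc msb (by linarith)
      = (G.K₂.mul α (b - α) mα mb msb).inv
        ≫ (𝟙 (G.K₂.obj α mα) ⊗ₘ G.K₂.res (c - α) (b - α) mc mb hsub)
        ≫ (G.K₂.mul α (c - α) mα mc msc).hom := by
    rw [← G.K₂.res_id α mα,
      ← G.K₂.mul_res α (c - α) α (b - α) mα mc mα mb msc msb le_rfl hsub,
      Iso.inv_hom_id_assoc]
  rw [G.ext_congr (show c = α + (c - α) by ring) hc msc,
    G.ext_congr (show b = α + (b - α) by ring) hb msb,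
    G.ext_hom_eq (G.M_base c hc hαc mα mc msc),
    G.ext_hom_eq (G.M_base b hb (le_trans hαc hcb) mα mb msb),
    res_congr G.K₁ (show c = α + (c - α) by ring) (show b = α + (b - α) by ring)
      hc hb msc msb hcb (by linarith),
    res_congr G.K₂ (show c = α + (c - α) by ring) (show b = α + (b - α) by ring)
      hc hb msc msb hcb (by linarith),
    R₁, R₂]
  simp only [Category.assoc, eqToHom_trans_assoc, eqToHom_refl, Category.id_comp,
    Iso.hom_inv_id_assoc]
  rw [tensorHom_comp_tensorHom_assoc, tensorHom_comp_tensorHom_assoc, ih, Category.id_comp, Category.comp_id]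

/-- Full naturality of the extension. -/
lemma N_all (n : ℕ) : ∀ (a b : ℝ) (ha : a ∈ Set.Ici (0 : ℝ)) (hb : b ∈ Set.Ici (0 : ℝ))
    (hab : a ≤ b), b ≤ n * α →
    G.K₁.res a b ha hb hab ≫ (G.ext a ha).hom
      = (G.ext b hb).hom ≫ G.K₂.res a b ha hb hab := by
  have hp : 0 < α := G.pos
  induction n with
  | zero =>
    intro a b ha hb hab hle
    have ha0 : (0 : ℝ) ≤ a := ha
    have hb0 : (0 : ℝ) ≤ b := hb
    simp only [Nat.cast_zero, zero_mul] at hle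
    rw [G.ext_of_le a ha (by linarith), G.ext_of_le b hb (by linarith)]
    exact G.tnat a b ha hb (by linarith) (by linarith) hab
  | succ n IH =>
    intro a b ha hb hab hle
    have ha0 : (0 : ℝ) ≤ a := ha
    have hb0 : (0 : ℝ) ≤ b := hb
    push_cast at hle
    rcases le_or_gt b α with hbα | hbα
    · rw [G.ext_of_le a ha (le_trans hab hbα), G.ext_of_le b hb hbα]
      exact G.tnat a b ha hb (le_trans hab hbα) hbα hab
    · have main : ∀ (c : ℝ) (hc : c ∈ Set.Ici (0 : ℝ)) (hαc : α ≤ c) (hcb : c ≤ b),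
          G.K₁.res c b hc hb hcb ≫ (G.ext c hc).hom
            = (G.ext b hb).hom ≫ G.K₂.res c b hc hb hcb := by
        intro c hc hαc hcb
        have hc0 : (0 : ℝ) ≤ c := hc
        exact G.N_step c b hc hb hαc hcb (Set.mem_Ici.mpr hp.le)
          (Set.mem_Ici.mpr (by linarith)) (Set.mem_Ici.mpr (by linarith))
          (Set.mem_Ici.mpr (by linarith)) (Set.mem_Ici.mpr (by linarith)) (by linarith)
          (IH (c - α) (b - α) (Set.mem_Ici.mpr (by linarith))
            (Set.mem_Ici.mpr (by linarith)) (by linarith) (by linarith))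
      rcases le_or_gt α a with haα | haα
      · exact main a ha haα hab
      · rw [← G.K₁.res_comp a α b ha (Set.mem_Ici.mpr hp.le) hb (by linarith) (by linarith),
          ← G.K₂.res_comp a α b ha (Set.mem_Ici.mpr hp.le) hb (by linarith) (by linarith),
          Category.assoc, G.ext_of_le a ha (by linarith),
          G.tnat a α ha (Set.mem_Ici.mpr hp.le) (by linarith) le_rfl (by linarith)]
        have m := main α (Set.mem_Ici.mpr hp.le) le_rfl (by linarith)
        rw [G.ext_of_le α (Set.mem_Ici.mpr hp.le) le_rfl] at m
        rw [reassoc_of% m]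

lemma N_any (a b : ℝ) (ha : a ∈ Set.Ici (0 : ℝ)) (hb : b ∈ Set.Ici (0 : ℝ)) (hab : a ≤ b) :
    G.K₁.res a b ha hb hab ≫ (G.ext a ha).hom
      = (G.ext b hb).hom ≫ G.K₂.res a b ha hb hab := by
  have hp : 0 < α := G.pos
  refine G.N_all (Nat.ceil (b / α)) a b ha hb hab ?_
  have := Nat.le_ceil (b / α)
  rw [div_le_iff₀ hp] at this
  linarith

lemma app_congr {I : Set ℝ} {K K' : MonoidalPresheaf C I} (f : MonoidalPresheaf.Hom K K')
    {x y : ℝ} (h : x = y) (hx : x ∈ I) (hy : y ∈ I) :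
    f.app x hx = eqToHom (objCongr K.obj h hx hy) ≫ f.app y hy ≫
      eqToHom (objCongr K'.obj h.symm hy hx) := by
  subst h; simp

lemma unique_app (f : MonoidalPresheaf.Hom G.K₁ G.K₂)
    (hf : ∀ (a : ℝ) (ha : a ∈ Set.Ici (0 : ℝ)) (haα : a ≤ α),
      f.app a ha = (G.t a ha haα).hom) (n : ℕ) :
    ∀ (a : ℝ) (ha : a ∈ Set.Ici (0 : ℝ)), a ≤ n * α → f.app a ha = (G.ext a ha).hom := by
  have hp : 0 < α := G.pos
  induction n with
  | zero =>
    intro a ha hle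
    have ha0 : (0 : ℝ) ≤ a := ha
    simp only [Nat.cast_zero, zero_mul] at hle
    rw [hf a ha (by linarith), G.ext_of_le a ha (by linarith)]
  | succ n IH =>
    intro a ha hle
    have ha0 : (0 : ℝ) ≤ a := ha
    push_cast at hle
    rcases le_or_gt a α with haα | haα
    · rw [hf a ha haα, G.ext_of_le a ha haα]
    · have mα : α ∈ Set.Ici (0 : ℝ) := Set.mem_Ici.mpr hp.le
      have ma : a - α ∈ Set.Ici (0 : ℝ) := Set.mem_Ici.mpr (by linarith)
      have ms : α + (a - α) ∈ Set.Ici (0 : ℝ) := Set.mem_Ici.mpr (by linarith)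
      have happ : f.app (α + (a - α)) ms
          = (G.K₁.mul α (a - α) mα ma ms).inv ≫ (f.app α mα ⊗ₘ f.app (a - α) ma)
              ≫ (G.K₂.mul α (a - α) mα ma ms).hom := by
        rw [← f.monoidal α (a - α) mα ma ms]; simp
      rw [app_congr f (show a = α + (a - α) by ring) ha ms, happ,
        hf α mα le_rfl, IH (a - α) ma (by linarith)]
      rw [G.ext_congr (show a = α + (a - α) by ring) ha ms,
        G.ext_hom_eq (G.M_base a ha (by linarith) mα ma ms),
        G.ext_of_le α mα le_rfl]

lemma unique_all (f : MonoidalPresheaf.Hom G.K₁ G.K₂)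
    (hf : ∀ (a : ℝ) (ha : a ∈ Set.Ici (0 : ℝ)) (haα : a ≤ α),
      f.app a ha = (G.t a ha haα).hom) (a : ℝ) (ha : a ∈ Set.Ici (0 : ℝ)) :
    f.app a ha = (G.ext a ha).hom := by
  have hp : 0 < α := G.pos
  refine G.unique_app f hf (Nat.ceil (a / α)) a ha ?_
  have := Nat.le_ceil (a / α)
  rw [div_le_iff₀ hp] at this
  linarith

end Glue

end Statement4

/-- Given a monoidal presheaf `K_I` on `[0,α]`, two monoidal presheaves
`𝒦₁, 𝒦₂` on `ℝ_{≥0}` and isomorphisms `θ : 𝒦₁|_{[0,α]} ≅ K_I`, `θ' : 𝒦₂|_{[0,α]} ≅ K_I`,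
there exists a unique isomorphism `λ : 𝒦₁ ≅ 𝒦₂` with `λ|_{[0,α]} = θ'⁻¹ ∘ θ`. -/
theorem existsUnique_iso_restricting_to (C : Type u) [Category.{v} C] [MonoidalCategory C]
    (α : ℝ) (hα : 0 < α) (KI : MonoidalPresheaf C (Set.Icc (0 : ℝ) α))
    (K₁ K₂ : MonoidalPresheaf C (Set.Ici (0 : ℝ)))
    (θ : (MonoidalPresheaf.restrictFunctor C
        (show Set.Icc (0 : ℝ) α ⊆ Set.Ici 0 from fun _ hx => hx.1)).obj K₁ ≅ KI)
    (θ' : (MonoidalPresheaf.restrictFunctor C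
        (show Set.Icc (0 : ℝ) α ⊆ Set.Ici 0 from fun _ hx => hx.1)).obj K₂ ≅ KI) :
    ∃! lam : K₁ ≅ K₂,
      (MonoidalPresheaf.restrictFunctor C
        (show Set.Icc (0 : ℝ) α ⊆ Set.Ici 0 from fun _ hx => hx.1)).mapIso lam
        = θ ≪≫ θ'.symm := by
  have ι : Set.Icc (0 : ℝ) α ⊆ Set.Ici 0 := fun _ hx => hx.1
  let G : Glue C α :=
    { pos := hα
      K₁ := K₁
      K₂ := K₂
      t := fun a ha haα =>
        { hom := MonoidalPresheaf.Hom.app θ.hom a ⟨ha, haα⟩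
            ≫ MonoidalPresheaf.Hom.app θ'.inv a ⟨ha, haα⟩
          inv := MonoidalPresheaf.Hom.app θ'.hom a ⟨ha, haα⟩
            ≫ MonoidalPresheaf.Hom.app θ.inv a ⟨ha, haα⟩
          hom_inv_id := by
            have hm : a ∈ Set.Icc (0 : ℝ) α := ⟨ha, haα⟩
            have e1 : MonoidalPresheaf.Hom.app θ'.inv a ⟨ha, haα⟩
                ≫ MonoidalPresheaf.Hom.app θ'.hom a ⟨ha, haα⟩ = 𝟙 _ :=
              congrArg (fun g => MonoidalPresheaf.Hom.app g a hm) θ'.inv_hom_id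
            have e2 : MonoidalPresheaf.Hom.app θ.hom a ⟨ha, haα⟩
                ≫ MonoidalPresheaf.Hom.app θ.inv a ⟨ha, haα⟩ = 𝟙 _ :=
              congrArg (fun g => MonoidalPresheaf.Hom.app g a hm) θ.hom_inv_id
            exact (Category.assoc _ _ _).trans
              ((congrArg (fun k => _ ≫ k) ((reassoc_of% e1) _)).trans e2)
          inv_hom_id := by
            have hm : a ∈ Set.Icc (0 : ℝ) α := ⟨ha, haα⟩
            have e1 : MonoidalPresheaf.Hom.app θ.inv a ⟨ha, haα⟩
                ≫ MonoidalPresheaf.Hom.app θ.hom a ⟨ha, haα⟩ = 𝟙 _ :=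
              congrArg (fun g => MonoidalPresheaf.Hom.app g a hm) θ.inv_hom_id
            have e2 : MonoidalPresheaf.Hom.app θ'.hom a ⟨ha, haα⟩
                ≫ MonoidalPresheaf.Hom.app θ'.inv a ⟨ha, haα⟩ = 𝟙 _ :=
              congrArg (fun g => MonoidalPresheaf.Hom.app g a hm) θ'.hom_inv_id
            exact (Category.assoc _ _ _).trans
              ((congrArg (fun k => _ ≫ k) ((reassoc_of% e1) _)).trans e2) }
      tnat := by
        intro a b ha hb haα hbα hab
        have n1 : K₁.res a b ha hb hab ≫ MonoidalPresheaf.Hom.app θ.hom a ⟨ha, haα⟩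
            = MonoidalPresheaf.Hom.app θ.hom b ⟨hb, hbα⟩
              ≫ KI.res a b ⟨ha, haα⟩ ⟨hb, hbα⟩ hab :=
          MonoidalPresheaf.Hom.naturality θ.hom a b ⟨ha, haα⟩ ⟨hb, hbα⟩ hab
        have n2 : KI.res a b ⟨ha, haα⟩ ⟨hb, hbα⟩ hab
              ≫ MonoidalPresheaf.Hom.app θ'.inv a ⟨ha, haα⟩
            = MonoidalPresheaf.Hom.app θ'.inv b ⟨hb, hbα⟩ ≫ K₂.res a b ha hb hab :=
          MonoidalPresheaf.Hom.naturality θ'.inv a b ⟨ha, haα⟩ ⟨hb, hbα⟩ hab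
        show K₁.res a b ha hb hab ≫ _ ≫ _ = (_ ≫ _) ≫ K₂.res a b ha hb hab
        exact (Category.assoc _ _ _).symm.trans ((eq_whisker n1 _).trans
          ((Category.assoc _ _ _).trans ((whisker_eq _ n2).trans (Category.assoc _ _ _).symm)))
      tmul := by
        intro a b ha hb hab haα hbα habα
        have m1 : (K₁.mul a b ha hb hab).hom
              ≫ MonoidalPresheaf.Hom.app θ.hom (a + b) ⟨hab, habα⟩
            = (MonoidalPresheaf.Hom.app θ.hom a ⟨ha, haα⟩
                ⊗ₘ MonoidalPresheaf.Hom.app θ.hom b ⟨hb, hbα⟩)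
              ≫ (KI.mul a b ⟨ha, haα⟩ ⟨hb, hbα⟩ ⟨hab, habα⟩).hom :=
          MonoidalPresheaf.Hom.monoidal θ.hom a b ⟨ha, haα⟩ ⟨hb, hbα⟩ ⟨hab, habα⟩
        have m2 : (KI.mul a b ⟨ha, haα⟩ ⟨hb, hbα⟩ ⟨hab, habα⟩).hom
              ≫ MonoidalPresheaf.Hom.app θ'.inv (a + b) ⟨hab, habα⟩
            = (MonoidalPresheaf.Hom.app θ'.inv a ⟨ha, haα⟩
                ⊗ₘ MonoidalPresheaf.Hom.app θ'.inv b ⟨hb, hbα⟩)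
              ≫ (K₂.mul a b ha hb hab).hom :=
          MonoidalPresheaf.Hom.monoidal θ'.inv a b ⟨ha, haα⟩ ⟨hb, hbα⟩ ⟨hab, habα⟩
        show (K₁.mul a b ha hb hab).hom ≫ _ ≫ _ = _
        exact (Category.assoc _ _ _).symm.trans ((eq_whisker m1 _).trans
          ((Category.assoc _ _ _).trans ((whisker_eq _ m2).trans
            ((Category.assoc _ _ _).symm.trans (eq_whisker (tensorHom_comp_tensorHom _ _ _ _) _))))) }
  let lamHom : MonoidalPresheaf.Hom K₁ K₂ :=
    { app := fun a ha => (G.ext a ha).hom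
      naturality := fun a b ha hb hab => G.N_any a b ha hb hab
      monoidal := fun a b ha hb hab => G.M_any a b ha hb hab }
  let lamInv : MonoidalPresheaf.Hom K₂ K₁ :=
    { app := fun a ha => (G.ext a ha).inv
      naturality := by
        intro a b ha hb hab
        have h := G.N_any a b ha hb hab
        rw [Iso.comp_inv_eq, Category.assoc, h]
        simp
        rfl
      monoidal := by
        intro a b ha hb hab
        have h : (K₁.mul a b ha hb hab).hom ≫ (G.ext (a + b) hab).hom
            = ((G.ext a ha).hom ⊗ₘ (G.ext b hb).hom) ≫ (K₂.mul a b ha hb hab).hom :=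
          G.M_any a b ha hb hab
        rw [Iso.comp_inv_eq, Category.assoc, h, tensorHom_comp_tensorHom_assoc]
        simp }
  let lam : K₁ ≅ K₂ :=
    { hom := lamHom
      inv := lamInv
      hom_inv_id := by
        apply MonoidalPresheaf.Hom.ext
        funext a ha
        exact (G.ext a ha).hom_inv_id
      inv_hom_id := by
        apply MonoidalPresheaf.Hom.ext
        funext a ha
        exact (G.ext a ha).inv_hom_id }
  refine ⟨lam, ?_, ?_⟩
  · apply Iso.ext
    apply MonoidalPresheaf.Hom.ext
    funext a ha
    show (G.ext a (ι ha)).hom = _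
    rw [G.ext_of_le a (ι ha) ha.2]
    rfl
  · intro μ hμ
    apply Iso.ext
    apply MonoidalPresheaf.Hom.ext
    funext a ha
    refine G.unique_all μ.hom ?_ a ha
    intro c hc hcα
    have hm : c ∈ Set.Icc (0 : ℝ) α := ⟨hc, hcα⟩
    have h1 := congrArg Iso.hom hμ
    exact congrArg (fun f => MonoidalPresheaf.Hom.app f c hm) h1
end

section
/- Let E be a real inner product space of dimension at least 2, and let x, z ∈ E be unit vectors (‖x‖ = ‖z‖ = 1). Let a, b ≥ 0 and suppose that the angle between x and z satisfies angle(x,z) ≤ a + b, where angle(x,z) = arccos⟨x,z⟩. Then there exists a unit vector y ∈ E with angle(x,y) ≤ a and angle(y,z) ≤ b. -/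
open InnerProductGeometry Real RealInnerProductSpace

/-- Auxiliary: given the key vector `w`, construct `y`. -/
lemma aux_angle_decomp {E : Type*} [NormedAddCommGroup E] [InnerProductSpace ℝ E]
    (x z w : E) (hx : ‖x‖ = 1) (hz : ‖z‖ = 1) (hw : ‖w‖ = 1)
    (hxw : ⟪x, w⟫ = 0) (hwz : ⟪w, z⟫ = Real.sin (angle x z))
    (a b : ℝ) (ha : 0 ≤ a) (haπ : a ≤ π) (hab : angle x z ≤ a + b)
    (haθ : a ≤ angle x z) :
    ∃ y : E, ‖y‖ = 1 ∧ angle x y ≤ a ∧ angle y z ≤ b := by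
  set θ := angle x z with hθ
  have hθπ : θ ≤ π := angle_le_pi x z
  have hxz : ⟪x, z⟫ = Real.cos θ := by
    have := cos_angle x z
    rw [hx, hz] at this
    simp at this
    linarith [this]
  have hxx : ⟪x, x⟫ = 1 := by
    have := real_inner_self_eq_norm_mul_norm x
    rw [hx] at this; linarith
  have hww : ⟪w, w⟫ = 1 := by
    have := real_inner_self_eq_norm_mul_norm w
    rw [hw] at this; linarith
  have hwx : ⟪w, x⟫ = 0 := by rw [real_inner_comm]; exact hxw
  refine ⟨Real.cos a • x + Real.sin a • w, ?_, ?_, ?_⟩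
  · have hyy : ⟪Real.cos a • x + Real.sin a • w, Real.cos a • x + Real.sin a • w⟫ = 1 := by
      simp only [inner_add_add_self, real_inner_smul_left, real_inner_smul_right, hxx, hww, hxw, hwx]
      ring_nf
      nlinarith [Real.sin_sq_add_cos_sq a]
    have h2 := real_inner_self_eq_norm_mul_norm (Real.cos a • x + Real.sin a • w)
    rw [hyy] at h2
    nlinarith [norm_nonneg (Real.cos a • x + Real.sin a • w)]
  · have hinner : ⟪x, Real.cos a • x + Real.sin a • w⟫ = Real.cos a := by
      simp [inner_add_right, real_inner_smul_right, hxx, hxw, hx]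
    rw [angle, hinner, hx]
    have hn : ‖Real.cos a • x + Real.sin a • w‖ = 1 := by
      have hyy : ⟪Real.cos a • x + Real.sin a • w, Real.cos a • x + Real.sin a • w⟫ = 1 := by
        simp only [inner_add_add_self, real_inner_smul_left, real_inner_smul_right, hxx, hww, hxw, hwx]
        ring_nf
        nlinarith [Real.sin_sq_add_cos_sq a]
      have h2 := real_inner_self_eq_norm_mul_norm (Real.cos a • x + Real.sin a • w)
      rw [hyy] at h2
      nlinarith [norm_nonneg (Real.cos a • x + Real.sin a • w)]
    rw [hn]
    simp [Real.arccos_cos ha haπ]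
  · have hinner : ⟪Real.cos a • x + Real.sin a • w, z⟫ = Real.cos (θ - a) := by
      simp only [inner_add_left, real_inner_smul_left, hxz, hwz, ← hθ]
      rw [Real.cos_sub]; ring
    have hn : ‖Real.cos a • x + Real.sin a • w‖ = 1 := by
      have hyy : ⟪Real.cos a • x + Real.sin a • w, Real.cos a • x + Real.sin a • w⟫ = 1 := by
        simp only [inner_add_add_self, real_inner_smul_left, real_inner_smul_right, hxx, hww, hxw, hwx]
        ring_nf
        nlinarith [Real.sin_sq_add_cos_sq a]
      have h2 := real_inner_self_eq_norm_mul_norm (Real.cos a • x + Real.sin a • w)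
      rw [hyy] at h2
      nlinarith [norm_nonneg (Real.cos a • x + Real.sin a • w)]
    rw [angle, hinner, hn, hz]
    simp only [mul_one, div_one]
    rw [Real.arccos_cos (by linarith) (by linarith)]
    linarith

/-- Let `E` be a real inner product space of dimension at least `2`
and let `x, z ∈ E` be unit vectors.  If `a, b ≥ 0` and the angle between `x` and `z`
is at most `a + b`, then there exists a unit vector `y` with `angle x y ≤ a` and
`angle y z ≤ b`. -/
theorem sphere_angle_triangle_decomposition (E : Type*) [NormedAddCommGroup E]
    [InnerProductSpace ℝ E] (hrank : 2 ≤ Module.rank ℝ E)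
    (x z : E) (hx : ‖x‖ = 1) (hz : ‖z‖ = 1) (a b : ℝ) (ha : 0 ≤ a) (hb : 0 ≤ b)
    (h : InnerProductGeometry.angle x z ≤ a + b) :
    ∃ y : E, ‖y‖ = 1 ∧ InnerProductGeometry.angle x y ≤ a
      ∧ InnerProductGeometry.angle y z ≤ b := by
  set θ := angle x z with hθ
  have hθ0 : 0 ≤ θ := angle_nonneg x z
  have hθπ : θ ≤ π := angle_le_pi x z
  have hz0 : z ≠ 0 := by intro h0; rw [h0, norm_zero] at hz; norm_num at hz
  by_cases hcase : θ ≤ a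
  · exact ⟨z, hz, hcase, by rw [angle_self hz0]; exact hb⟩
  push_neg at hcase
  have haπ : a ≤ π := le_of_lt (lt_of_lt_of_le hcase hθπ)
  have hxz : ⟪x, z⟫ = Real.cos θ := by
    have := cos_angle x z
    rw [hx, hz] at this
    simp at this
    linarith [this]
  have hxx : ⟪x, x⟫ = 1 := by
    have := real_inner_self_eq_norm_mul_norm x
    rw [hx] at this; linarith
  -- construct w with ‖w‖ = 1, ⟪x,w⟫ = 0, ⟪w,z⟫ = sin θ
  obtain ⟨w, hw, hxw, hwz⟩ : ∃ w : E, ‖w‖ = 1 ∧ ⟪x, w⟫ = 0 ∧ ⟪w, z⟫ = Real.sin θ := by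
    by_cases hpi : θ = π
    · -- z = -x
      have hz' : z = -x := by
        have h1 : ⟪x, -z⟫ = 1 := by
          rw [inner_neg_right, hxz, hpi, Real.cos_pi]; ring
        have h2 : x = -z := (inner_eq_one_iff_of_norm_eq_one hx (by rw [norm_neg]; exact hz)).mp h1
        rw [h2]; simp
      obtain ⟨v, hv⟩ : ∃ v : E, v ∉ Submodule.span ℝ ({x} : Set E) := by
        by_contra hcon
        push_neg at hcon
        have htop : Submodule.span ℝ ({x} : Set E) = ⊤ :=
          Submodule.eq_top_iff'.mpr hcon
        have h1 : Module.rank ℝ E ≤ 1 := by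
          have := rank_span_le (R := ℝ) ({x} : Set E)
          rw [htop] at this
          simpa using this
        have : (2 : Cardinal) ≤ 1 := le_trans hrank h1
        norm_num at this
      set w0 := v - ⟪x, v⟫ • x with hw0
      have hw0ne : w0 ≠ 0 := by
        intro h0
        apply hv
        have : v = ⟪x, v⟫ • x := by
          rw [hw0] at h0; rw [sub_eq_zero] at h0; exact h0
        rw [this]
        exact Submodule.smul_mem _ _ (Submodule.mem_span_singleton_self x)
      have hxw0 : ⟪x, w0⟫ = 0 := by
        rw [hw0, inner_sub_right, real_inner_smul_right, hxx]; ring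
      refine ⟨‖w0‖⁻¹ • w0, ?_, ?_, ?_⟩
      · rw [norm_smul, norm_inv, norm_norm, inv_mul_cancel₀ (norm_ne_zero_iff.mpr hw0ne)]
      · rw [real_inner_smul_right, hxw0]; ring
      · rw [hz', inner_neg_right, real_inner_smul_left, real_inner_comm, hxw0, hpi,
          Real.sin_pi]; ring
    · have hθlt : θ < π := lt_of_le_of_ne hθπ hpi
      have hsin : 0 < Real.sin θ :=
        Real.sin_pos_of_pos_of_lt_pi (lt_of_le_of_lt ha hcase) hθlt
      have hzz : ⟪z, z⟫ = 1 := by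
        have := real_inner_self_eq_norm_mul_norm z
        rw [hz] at this; linarith
      have hzx : ⟪z, x⟫ = Real.cos θ := by rw [real_inner_comm]; exact hxz
      refine ⟨(Real.sin θ)⁻¹ • (z - Real.cos θ • x), ?_, ?_, ?_⟩
      · have hww : ⟪z - Real.cos θ • x, z - Real.cos θ • x⟫ = Real.sin θ * Real.sin θ := by
          simp only [inner_sub_sub_self, real_inner_smul_left, real_inner_smul_right,
            hxx, hzz, hxz, hzx]
          nlinarith [Real.sin_sq_add_cos_sq θ]
        have h2 := real_inner_self_eq_norm_mul_norm (z - Real.cos θ • x)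
        rw [hww] at h2
        have hn : ‖z - Real.cos θ • x‖ = Real.sin θ := by
          nlinarith [norm_nonneg (z - Real.cos θ • x)]
        rw [norm_smul, norm_inv, Real.norm_eq_abs, abs_of_pos hsin, hn,
          inv_mul_cancel₀ (ne_of_gt hsin)]
      · rw [real_inner_smul_right, inner_sub_right, real_inner_smul_right, hxz, hxx]; ring
      · rw [real_inner_smul_left, inner_sub_left, real_inner_smul_left, hxz, hzz]
        field_simp
        nlinarith [Real.sin_sq_add_cos_sq θ]
  exact aux_angle_decomp x z w hx hz hw hxw (by rw [← hθ]; exact hwz) a b ha haπ h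
    (le_of_lt hcase)
end
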